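/- arXiv:1401.3367 — 3 statements merged into one kernel-verified Lean document; each statement's English description precedes it below -/
import Mathlib

section
/- Let T be an f-invariant subspace of V such that V = T ⊕ V_2 for some f-invariant subspace V_2, the restriction f|_T has only unrepeated elementary divisors (d(f|_T, t) ≤ 1 for all t ≥ 1), and f|_T and f|_{V_2} have no elementary divisor in common (there is no t ≥ 1 with d(f|_T, t) ≥ 1 and d(f|_{V_2}, t) ≥ 1). Let π_T : V → V be the projection onto T along V_2. Then for every subset Y ⊆ T one has Y^c ∩ T = π_T(Y^c) = Y^{c_T}, where Y^c is the characteristic hull of Y in V with respect to f and Y^{c_T} is the characteristic hull of Y in T with respect to f|_T. -/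
open Module LinearMap

section Defs

variable {K V : Type*} [Field K] [AddCommGroup V] [Module K V]

/-- `α` commutes with `f`. -/
def Commutes (f : V →ₗ[K] V) (α : V ≃ₗ[K] V) : Prop :=
  ∀ v, α (f v) = f (α v)

/-- `X` is hyperinvariant: invariant under every endomorphism commuting with `f`. -/
def Hyperinv (f : V →ₗ[K] V) (X : Submodule K V) : Prop :=
  ∀ g : V →ₗ[K] V, (∀ v, g (f v) = f (g v)) → ∀ x ∈ X, g x ∈ X

/-- `X` is characteristic: `f`-invariant and invariant under every automorphism
commuting with `f`. -/
def Charinv (f : V →ₗ[K] V) (X : Submodule K V) : Prop :=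
  (∀ x ∈ X, f x ∈ X) ∧ ∀ α : V ≃ₗ[K] V, Commutes f α → ∀ x ∈ X, α x ∈ X

/-- The characteristic hull of a set `B`: the subspace spanned by all
`f^i (α b)`, `b ∈ B`, `α` an automorphism commuting with `f`. -/
def charHull (f : V →ₗ[K] V) (B : Set V) : Submodule K V :=
  Submodule.span K
    {y | ∃ b ∈ B, ∃ i : ℕ, ∃ α : V ≃ₗ[K] V, Commutes f α ∧ y = (f ^ i) (α b)}

/-- The `f`-cyclic subspace generated by `x`. -/
def cyc (f : V →ₗ[K] V) (x : V) : Submodule K V :=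
  Submodule.span K (Set.range fun i : ℕ => (f ^ i) x)

/-- The `f`-invariant span of a set `B`. -/
def invSpan (f : V →ₗ[K] V) (B : Set V) : Submodule K V :=
  Submodule.span K {y | ∃ b ∈ B, ∃ i : ℕ, y = (f ^ i) b}

/-- The exponent of `x`: the least `ℓ` with `f^ℓ x = 0`. -/
noncomputable def expnt (f : V →ₗ[K] V) (x : V) : ℕ :=
  sInf {ℓ : ℕ | (f ^ ℓ) x = 0}

/-- The height of `x`: the largest `q` with `x ∈ f^q V`. -/
noncomputable def hgt (f : V →ₗ[K] V) (x : V) : ℕ :=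
  sSup {q : ℕ | x ∈ LinearMap.range (f ^ q)}

/-- `u` is a generator of `V`: `V = ⟨u⟩ ⊕ V₂` for some `f`-invariant `V₂`. -/
def IsGenerator (f : V →ₗ[K] V) (u : V) : Prop :=
  u ≠ 0 ∧ ∃ V₂ : Submodule K V, (∀ x ∈ V₂, f x ∈ V₂) ∧ IsCompl (cyc f u) V₂

/-- `(u 0, …, u (m-1))` is a generator tuple of `V`:
`V = ⟨u 0⟩ ⊕ ⋯ ⊕ ⟨u (m-1)⟩` with nondecreasing exponents. -/
def IsGenTuple {m : ℕ} (f : V →ₗ[K] V) (u : Fin m → V) : Prop :=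
  DirectSum.IsInternal (fun i => cyc f (u i)) ∧ Monotone fun i => expnt f (u i)

/-- The Ulm invariant `d(f,r) = dim ((ker f ⊓ f^{r-1} V) / (ker f ⊓ f^r V))`. -/
noncomputable def ulm (f : V →ₗ[K] V) (r : ℕ) : ℕ :=
  Module.finrank K
    (↥(LinearMap.ker f ⊓ LinearMap.range (f ^ (r - 1))) ⧸
      Submodule.comap (LinearMap.ker f ⊓ LinearMap.range (f ^ (r - 1))).subtype
        (LinearMap.ker f ⊓ LinearMap.range (f ^ r)))

/-- The largest hyperinvariant subspace contained in `X`
(the sum of all hyperinvariant subspaces contained in `X`). -/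
noncomputable def largestHyperinv (f : V →ₗ[K] V) (X : Submodule K V) : Submodule K V :=
  sSup {W : Submodule K V | Hyperinv f W ∧ W ≤ X}

end Defs

set_option synthInstance.maxHeartbeats 1000000
set_option maxHeartbeats 1600000

section Aux

variable {K V : Type*} [Field K] [AddCommGroup V] [Module K V]
variable (f : V →ₗ[K] V) {T V₂ : Submodule K V}

lemma coe_restrict_pow (hT : ∀ x ∈ T, f x ∈ T)
    (n : ℕ) (x : T) : (((f.restrict hT) ^ n) x : V) = (f ^ n) (x : V) := by
  rw [Module.End.pow_restrict n hT, LinearMap.restrict_coe_apply]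

lemma commutes_pow (α : V ≃ₗ[K] V) (hα : Commutes f α) (k : ℕ) (v : V) :
    α ((f ^ k) v) = (f ^ k) (α v) := by
  induction k generalizing v with
  | zero => simp
  | succ k ih =>
    rw [pow_succ, Module.End.mul_apply, Module.End.mul_apply, ih, hα]

lemma commutes_symm (α : V ≃ₗ[K] V) (hα : Commutes f α) : Commutes f α.symm := by
  intro v
  calc α.symm (f v) = α.symm (f (α (α.symm v))) := by rw [α.apply_symm_apply]
    _ = α.symm (α (f (α.symm v))) := by rw [hα]
    _ = f (α.symm v) := α.symm_apply_apply _

lemma proj_comm (hT : ∀ x ∈ T, f x ∈ T)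
    (hV₂ : ∀ x ∈ V₂, f x ∈ V₂) (hcompl : IsCompl T V₂) (v : V) :
    ((T.linearProjOfIsCompl V₂ hcompl) (f v) : V) = f ((T.linearProjOfIsCompl V₂ hcompl) v) := by
  set π := T.linearProjOfIsCompl V₂ hcompl with hπ
  set π₂ := V₂.linearProjOfIsCompl T hcompl.symm with hπ₂
  have hv : ((π v : V) + (π₂ v : V)) = v :=
    Submodule.projection_add_projection_eq_self hcompl v
  have h1 : π (f (π v : V)) = ⟨f (π v : V), hT _ (π v).2⟩ :=
    Submodule.linearProjOfIsCompl_apply_left hcompl ⟨f (π v : V), hT _ (π v).2⟩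
  have h2 : π (f (π₂ v : V)) = 0 :=
    Submodule.projectionOnto_apply_of_mem_right hcompl (hV₂ _ (π₂ v).2)
  calc ((π (f v) : V)) = (π (f ((π v : V) + (π₂ v : V))) : V) := by rw [hv]
    _ = ((π (f (π v : V)) + π (f (π₂ v : V)) : T) : V) := by rw [map_add, map_add]
    _ = f (π v : V) := by rw [h1, h2]; simp

lemma proj_pow_comm (hT : ∀ x ∈ T, f x ∈ T)
    (hV₂ : ∀ x ∈ V₂, f x ∈ V₂) (hcompl : IsCompl T V₂) (i : ℕ) (v : V) :
    ((T.linearProjOfIsCompl V₂ hcompl) ((f ^ i) v) : V) =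
      (f ^ i) ((T.linearProjOfIsCompl V₂ hcompl) v : V) := by
  induction i generalizing v with
  | zero => simp
  | succ i ih =>
    have h1 : (f ^ (i + 1)) v = (f ^ i) (f v) := by
      rw [pow_succ, Module.End.mul_apply]
    have h2 : (f ^ (i + 1)) ((T.linearProjOfIsCompl V₂ hcompl) v : V) =
        (f ^ i) (f ((T.linearProjOfIsCompl V₂ hcompl) v : V)) := by
      rw [pow_succ, Module.End.mul_apply]
    rw [h1, ih (f v), proj_comm f hT hV₂ hcompl, h2]

/-- Extend an automorphism of `T` by the identity on `V₂`. -/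
noncomputable def extAut (hcompl : IsCompl T V₂) (α : T ≃ₗ[K] T) : V ≃ₗ[K] V :=
  (Submodule.prodEquivOfIsCompl T V₂ hcompl).symm ≪≫ₗ
    (α.prodCongr (LinearEquiv.refl K V₂)) ≪≫ₗ (Submodule.prodEquivOfIsCompl T V₂ hcompl)

lemma extAut_apply_left (hcompl : IsCompl T V₂) (α : T ≃ₗ[K] T) (t : T) :
    extAut hcompl α (t : V) = (α t : V) := by
  simp [extAut, Submodule.prodEquivOfIsCompl_symm_apply_left,
    Submodule.coe_prodEquivOfIsCompl']

lemma extAut_apply_right (hcompl : IsCompl T V₂) (α : T ≃ₗ[K] T) (w : V₂) :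
    extAut hcompl α (w : V) = (w : V) := by
  simp [extAut, Submodule.prodEquivOfIsCompl_symm_apply_right,
    Submodule.coe_prodEquivOfIsCompl']

lemma extAut_commutes (hT : ∀ x ∈ T, f x ∈ T) (hV₂ : ∀ x ∈ V₂, f x ∈ V₂)
    (hcompl : IsCompl T V₂) (α : T ≃ₗ[K] T)
    (hα : ∀ t, α ((f.restrict hT) t) = (f.restrict hT) (α t)) :
    Commutes f (extAut hcompl α) := by
  intro v
  set π := T.linearProjOfIsCompl V₂ hcompl
  set π₂ := V₂.linearProjOfIsCompl T hcompl.symm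
  have hv : ((π v : V) + (π₂ v : V)) = v :=
    Submodule.projection_add_projection_eq_self hcompl v
  have key : ∀ t : T, extAut hcompl α (f (t : V)) = f (extAut hcompl α (t : V)) := by
    intro t
    have h1 : f (t : V) = ((f.restrict hT t : T) : V) := rfl
    rw [h1, extAut_apply_left hcompl, hα, extAut_apply_left hcompl]
    rfl
  have key2 : ∀ w : V₂, extAut hcompl α (f (w : V)) = f (extAut hcompl α (w : V)) := by
    intro w
    rw [extAut_apply_right hcompl,
      show f (w : V) = ((⟨f w, hV₂ _ w.2⟩ : V₂) : V) from rfl,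
      extAut_apply_right hcompl]
  calc extAut hcompl α (f v) = extAut hcompl α (f ((π v : V) + (π₂ v : V))) := by rw [hv]
    _ = extAut hcompl α (f (π v : V)) + extAut hcompl α (f (π₂ v : V)) := by
        rw [map_add, map_add]
    _ = f (extAut hcompl α (π v : V)) + f (extAut hcompl α (π₂ v : V)) := by
        rw [key, key2]
    _ = f (extAut hcompl α v) := by rw [← map_add, ← map_add, hv]

/-- The compression of `α` to `T`. -/
noncomputable def betaMap (hcompl : IsCompl T V₂) (α : V ≃ₗ[K] V) : T →ₗ[K] T :=
  (T.linearProjOfIsCompl V₂ hcompl) ∘ₗ ((α : V →ₗ[K] V) ∘ₗ T.subtype)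

lemma betaMap_commutes (hT : ∀ x ∈ T, f x ∈ T) (hV₂ : ∀ x ∈ V₂, f x ∈ V₂)
    (hcompl : IsCompl T V₂) (α : V ≃ₗ[K] V) (hα : Commutes f α) (t : T) :
    betaMap hcompl α ((f.restrict hT) t) = (f.restrict hT) (betaMap hcompl α t) := by
  apply Subtype.ext
  have h1 : (betaMap hcompl α ((f.restrict hT) t) : V) =
      ((T.linearProjOfIsCompl V₂ hcompl) (α (f (t : V))) : V) := rfl
  rw [h1, hα, proj_comm f hT hV₂ hcompl]
  rfl

lemma betaMap_pow_comm (hT : ∀ x ∈ T, f x ∈ T) (hV₂ : ∀ x ∈ V₂, f x ∈ V₂)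
    (hcompl : IsCompl T V₂) (α : V ≃ₗ[K] V) (hα : Commutes f α) (k : ℕ) (t : T) :
    betaMap hcompl α (((f.restrict hT) ^ k) t) =
      ((f.restrict hT) ^ k) (betaMap hcompl α t) := by
  induction k generalizing t with
  | zero => simp
  | succ k ih =>
    rw [pow_succ, Module.End.mul_apply, Module.End.mul_apply, ih,
      betaMap_commutes f hT hV₂ hcompl α hα]

lemma beta_injective [FiniteDimensional K V] (hT : ∀ x ∈ T, f x ∈ T)
    (hV₂ : ∀ x ∈ V₂, f x ∈ V₂) (hcompl : IsCompl T V₂) (hf : IsNilpotent f)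
    (hdisj : ¬ ∃ t, 1 ≤ t ∧ 1 ≤ ulm (f.restrict hT) t ∧ 1 ≤ ulm (f.restrict hV₂) t)
    (α : V ≃ₗ[K] V) (hα : Commutes f α) :
    Function.Injective (betaMap hcompl α) := by
  classical
  set g := f.restrict hT with hgdef
  set g₂ := f.restrict hV₂ with hg2def
  set β := betaMap hcompl α with hβdef
  obtain ⟨n, hn⟩ := hf
  have hgn : g ^ n = 0 := by
    rw [hgdef, Module.End.pow_restrict n hT]
    ext x
    simp [hn]
  rw [injective_iff_map_eq_zero]
  intro t₀ hβt₀
  by_contra ht₀ne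
  -- pass to an element of the kernel of g
  have hex : ∃ e, (g ^ e) t₀ = 0 := ⟨n, by rw [hgn]; rfl⟩
  set e := Nat.find hex with hedef
  have he0 : (g ^ e) t₀ = 0 := Nat.find_spec hex
  have hepos : 0 < e := by
    rcases Nat.eq_zero_or_pos e with h0 | h0
    · exfalso
      apply ht₀ne
      have := he0
      rw [h0] at this
      simpa using this
    · exact h0
  set t : T := (g ^ (e - 1)) t₀ with htdef
  have htne : t ≠ 0 := Nat.find_min hex (by omega)
  have hgt : g t = 0 := by
    have h1 : e - 1 + 1 = e := Nat.succ_pred_eq_of_pos hepos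
    rw [htdef, ← Module.End.mul_apply, ← pow_succ', h1, he0]
  have hβt : β t = 0 := by
    rw [htdef, betaMap_pow_comm f hT hV₂ hcompl α hα, hβt₀, map_zero]
  have hαtV₂ : α (t : V) ∈ V₂ := by
    have h0 : T.linearProjOfIsCompl V₂ hcompl (α (t : V)) = 0 := hβt
    exact (Submodule.linearProjOfIsCompl_apply_eq_zero_iff hcompl).1 h0
  -- the height of t in T
  set S := {q : ℕ | t ∈ LinearMap.range (g ^ q)} with hSdef
  have hS0 : (0 : ℕ) ∈ S := ⟨t, by simp⟩
  have hSbdd : ∀ q ∈ S, q < n := by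
    intro q hq
    by_contra hqn
    push_neg at hqn
    obtain ⟨x, hx⟩ := hq
    apply htne
    rw [← hx]
    have hgq : g ^ q = 0 := by
      have h1 : g ^ q = g ^ n * g ^ (q - n) := by
        rw [← pow_add]
        congr 1
        omega
      rw [h1, hgn, zero_mul]
    rw [hgq]
    rfl
  have hSne : S.Nonempty := ⟨0, hS0⟩
  have hSbdd' : BddAbove S := ⟨n, fun q hq => le_of_lt (hSbdd q hq)⟩
  set h := sSup S with hhdef
  have hhS : h ∈ S := Nat.sSup_mem hSne hSbdd'
  have hh1S : h + 1 ∉ S := by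
    intro hmem
    have := le_csSup hSbdd' hmem
    omega
  -- the Ulm invariant of g at h+1 is positive
  have hulmT : 1 ≤ ulm g (h + 1) := by
    have htN : t ∈ LinearMap.ker g ⊓ LinearMap.range (g ^ (h + 1 - 1)) := ⟨hgt, hhS⟩
    have hne : (Submodule.Quotient.mk (⟨t, htN⟩) :
        _ ⧸ Submodule.comap (LinearMap.ker g ⊓ LinearMap.range (g ^ (h + 1 - 1))).subtype
          (LinearMap.ker g ⊓ LinearMap.range (g ^ (h + 1)))) ≠ 0 := by
      intro heq
      have hmem := (Submodule.Quotient.mk_eq_zero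
        (Submodule.comap (LinearMap.ker g ⊓ LinearMap.range (g ^ (h + 1 - 1))).subtype
          (LinearMap.ker g ⊓ LinearMap.range (g ^ (h + 1))))).mp heq
      exact hh1S hmem.2
    have hnt : Nontrivial
        (↥(LinearMap.ker g ⊓ LinearMap.range (g ^ (h + 1 - 1))) ⧸
          Submodule.comap (LinearMap.ker g ⊓ LinearMap.range (g ^ (h + 1 - 1))).subtype
            (LinearMap.ker g ⊓ LinearMap.range (g ^ (h + 1)))) := nontrivial_of_ne _ _ hne
    exact Module.finrank_pos
  -- hence the Ulm invariant of g₂ at h+1 vanishes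
  have hulmV : ulm g₂ (h + 1) = 0 := by
    by_contra hne
    exact hdisj ⟨h + 1, by omega, hulmT, by omega⟩
  have hincl : ∀ x : V₂, x ∈ LinearMap.ker g₂ ⊓ LinearMap.range (g₂ ^ h) →
      x ∈ LinearMap.ker g₂ ⊓ LinearMap.range (g₂ ^ (h + 1)) := by
    intro x hx
    have hx' : x ∈ LinearMap.ker g₂ ⊓ LinearMap.range (g₂ ^ (h + 1 - 1)) := hx
    have hsub : Subsingleton
        (↥(LinearMap.ker g₂ ⊓ LinearMap.range (g₂ ^ (h + 1 - 1))) ⧸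
          Submodule.comap (LinearMap.ker g₂ ⊓ LinearMap.range (g₂ ^ (h + 1 - 1))).subtype
            (LinearMap.ker g₂ ⊓ LinearMap.range (g₂ ^ (h + 1)))) :=
      Module.finrank_zero_iff.mp hulmV
    have hmk : (Submodule.Quotient.mk (⟨x, hx'⟩) :
        _ ⧸ Submodule.comap (LinearMap.ker g₂ ⊓ LinearMap.range (g₂ ^ (h + 1 - 1))).subtype
          (LinearMap.ker g₂ ⊓ LinearMap.range (g₂ ^ (h + 1)))) = 0 := Subsingleton.elim _ _
    exact (Submodule.Quotient.mk_eq_zero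
        (Submodule.comap (LinearMap.ker g₂ ⊓ LinearMap.range (g₂ ^ (h + 1 - 1))).subtype
          (LinearMap.ker g₂ ⊓ LinearMap.range (g₂ ^ (h + 1))))).mp hmk
  -- s = α t lies in V₂, is killed by f, has height ≥ h in V₂
  set s : V := α (t : V) with hsdef
  have hfs : f s = 0 := by
    rw [hsdef, ← hα]
    have h1 : f (t : V) = ((g t : T) : V) := rfl
    rw [h1, hgt]
    simp
  obtain ⟨t', hgt'⟩ := hhS
  set π := T.linearProjOfIsCompl V₂ hcompl
  set π₂ := V₂.linearProjOfIsCompl T hcompl.symm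
  have hs_decomp : s = (f ^ h) (α (t' : V)) := by
    rw [hsdef, ← hgt', coe_restrict_pow, commutes_pow f α hα]
  set p : T := π (α (t' : V)) with hpdef
  set w : V₂ := π₂ (α (t' : V)) with hwdef
  have hsum : ((p : V) + (w : V)) = α (t' : V) :=
    Submodule.projection_add_projection_eq_self hcompl _
  have hs_eq : s = (f ^ h) (p : V) + (f ^ h) (w : V) := by
    rw [hs_decomp, ← hsum, map_add]
  have hfw : (f ^ h) (w : V) ∈ V₂ := Module.End.pow_apply_mem_of_forall_mem h hV₂ _ w.2
  have hfp0 : (f ^ h) (p : V) = 0 := by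
    have hmem : (f ^ h) (p : V) ∈ T ⊓ V₂ := by
      constructor
      · exact Module.End.pow_apply_mem_of_forall_mem h hT _ p.2
      · have : (f ^ h) (p : V) = s - (f ^ h) (w : V) := by
          rw [hs_eq]; abel
        rw [this]
        exact sub_mem hαtV₂ hfw
    rw [hcompl.inf_eq_bot] at hmem
    simpa using hmem
  have hs_fw : s = (f ^ h) (w : V) := by rw [hs_eq, hfp0, zero_add]
  set sHat : V₂ := ⟨s, hαtV₂⟩ with hsHatdef
  have h1 : sHat ∈ LinearMap.ker g₂ := by
    rw [LinearMap.mem_ker]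
    apply Subtype.ext
    rw [LinearMap.restrict_coe_apply]
    simpa using hfs
  have h2 : sHat ∈ LinearMap.range (g₂ ^ h) := by
    refine ⟨w, Subtype.ext ?_⟩
    rw [coe_restrict_pow]
    exact hs_fw.symm
  obtain ⟨-, r, hr⟩ := hincl sHat ⟨h1, h2⟩
  have hs2 : s = (f ^ (h + 1)) (r : V) := by
    rw [← coe_restrict_pow f hV₂ (h + 1) r, hr]
  -- pull back with α⁻¹
  have hαs : Commutes f α.symm := commutes_symm f α hα
  have ht_eq : (t : V) = (f ^ (h + 1)) (α.symm (r : V)) := by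
    have h3 : (t : V) = α.symm s := by rw [hsdef, α.symm_apply_apply]
    rw [h3, hs2, commutes_pow f α.symm hαs]
  set p' : T := π (α.symm (r : V)) with hp'def
  set w' : V₂ := π₂ (α.symm (r : V)) with hw'def
  have hsum' : ((p' : V) + (w' : V)) = α.symm (r : V) :=
    Submodule.projection_add_projection_eq_self hcompl _
  have ht_eq2 : (t : V) = (f ^ (h + 1)) (p' : V) + (f ^ (h + 1)) (w' : V) := by
    rw [ht_eq, ← hsum', map_add]
  have hfw0 : (f ^ (h + 1)) (w' : V) = 0 := by
    have hmem : (f ^ (h + 1)) (w' : V) ∈ T ⊓ V₂ := by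
      constructor
      · have : (f ^ (h + 1)) (w' : V) = (t : V) - (f ^ (h + 1)) (p' : V) := by
          rw [ht_eq2]; abel
        rw [this]
        exact sub_mem t.2 (Module.End.pow_apply_mem_of_forall_mem (h + 1) hT _ p'.2)
      · exact Module.End.pow_apply_mem_of_forall_mem (h + 1) hV₂ _ w'.2
    rw [hcompl.inf_eq_bot] at hmem
    simpa using hmem
  apply hh1S
  refine ⟨p', Subtype.ext ?_⟩
  rw [coe_restrict_pow]
  rw [ht_eq2, hfw0, add_zero]

end Aux

theorem stmt15 {K V : Type*} [Field K] [AddCommGroup V] [Module K V]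
    [FiniteDimensional K V] (f : V →ₗ[K] V) (hf : IsNilpotent f)
    (T V₂ : Submodule K V) (hT : ∀ x ∈ T, f x ∈ T) (hV₂ : ∀ x ∈ V₂, f x ∈ V₂)
    (hcompl : IsCompl T V₂)
    (hTun : ∀ t, 1 ≤ t → ulm (f.restrict hT) t ≤ 1)
    (hdisj : ¬ ∃ t, 1 ≤ t ∧ 1 ≤ ulm (f.restrict hT) t ∧ 1 ≤ ulm (f.restrict hV₂) t)
    (Y : Set V) (hY : Y ⊆ (T : Set V)) :
    charHull f Y ⊓ T =
        Submodule.map (T.subtype ∘ₗ T.linearProjOfIsCompl V₂ hcompl) (charHull f Y) ∧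
      charHull f Y ⊓ T =
        Submodule.map T.subtype
          (charHull (f.restrict hT) ((Subtype.val ⁻¹' Y : Set T))) := by
  set π := T.linearProjOfIsCompl V₂ hcompl with hπdef
  set g := f.restrict hT with hgdef
  -- C ≤ A
  have hCA : Submodule.map T.subtype (charHull g (Subtype.val ⁻¹' Y)) ≤ charHull f Y ⊓ T := by
    rw [charHull, Submodule.map_span, Submodule.span_le]
    rintro y ⟨z, ⟨b, hb, i, αT, hαT, rfl⟩, rfl⟩
    refine ⟨?_, ?_⟩
    · apply Submodule.subset_span
      refine ⟨(b : V), hb, i, extAut hcompl αT,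
        extAut_commutes f hT hV₂ hcompl αT hαT, ?_⟩
      show ((((g ^ i) (αT b) : T)) : V) = (f ^ i) (extAut hcompl αT (b : V))
      rw [extAut_apply_left hcompl, hgdef, coe_restrict_pow]
    · exact ((g ^ i) (αT b)).2
  -- A ≤ B
  have hAB : charHull f Y ⊓ T ≤
      Submodule.map (T.subtype ∘ₗ π) (charHull f Y) := by
    rintro x ⟨hx1, hx2⟩
    refine ⟨x, hx1, ?_⟩
    show (π x : V) = x
    rw [show x = ((⟨x, hx2⟩ : T) : V) from rfl, hπdef,
      Submodule.linearProjOfIsCompl, Submodule.projectionOnto_apply_left hcompl]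
  -- B ≤ C
  have hBC : Submodule.map (T.subtype ∘ₗ π) (charHull f Y) ≤
      Submodule.map T.subtype (charHull g (Subtype.val ⁻¹' Y)) := by
    rw [charHull, Submodule.map_span, Submodule.span_le]
    rintro y ⟨z, ⟨b, hb, i, α, hα, rfl⟩, rfl⟩
    have hbT : b ∈ T := hY hb
    have hinj : Function.Injective (betaMap hcompl α) :=
      beta_injective f hT hV₂ hcompl hf hdisj α hα
    have hsurj : Function.Surjective (betaMap hcompl α) :=
      LinearMap.injective_iff_surjective.mp hinj
    set βe := LinearEquiv.ofBijective (betaMap hcompl α) ⟨hinj, hsurj⟩ with hβedef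
    have hβe_comm : Commutes g βe := by
      intro u
      show betaMap hcompl α (g u) = g (betaMap hcompl α u)
      exact betaMap_commutes f hT hV₂ hcompl α hα u
    have key : π ((f ^ i) (α b)) = (g ^ i) (βe ⟨b, hbT⟩) := by
      apply Subtype.ext
      have h1 : (π ((f ^ i) (α b)) : V) = (f ^ i) (π (α b) : V) :=
        proj_pow_comm f hT hV₂ hcompl i (α b)
      have h2 : ((((g ^ i) (βe ⟨b, hbT⟩) : T)) : V) = (f ^ i) (βe ⟨b, hbT⟩ : V) := by
        rw [hgdef, coe_restrict_pow]
      rw [h1, h2]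
      rfl
    refine ⟨π ((f ^ i) (α b)), ?_, rfl⟩
    rw [key]
    exact Submodule.subset_span ⟨⟨b, hbT⟩, hb, i, βe, hβe_comm, rfl⟩
  exact ⟨le_antisymm hAB (hBC.trans hCA), le_antisymm (hAB.trans hBC) hCA⟩
end

section
/- Let E and G be f-invariant subspaces of V with V = E ⊕ G such that d(f|_E, t) = d(f, t) whenever d(f, t) = 1 and d(f|_G, t) = d(f, t) whenever d(f, t) > 1. Let Y be a characteristic subspace of E with respect to f|_E. If Y_s is a linear subspace of Y and W is a linear subspace of G such that Y_s + W is a characteristic subspace of V, then (Y + W)^c ∩ E = Y, where (Y + W)^c is the characteristic hull in V. Moreover, if Y is not hyperinvariant in E with respect to f|_E, then (Y + W)^c is not hyperinvariant in V. -/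
open Module LinearMap

section Aux
variable {K V : Type*} [Field K] [AddCommGroup V] [Module K V]

lemma comm_pow (f : V →ₗ[K] V) (α : V ≃ₗ[K] V) (hα : Commutes f α) (q : ℕ) (v : V) :
    α ((f ^ q) v) = (f ^ q) (α v) := by
  induction q generalizing v with
  | zero => simp
  | succ n ih => simp only [pow_succ', Module.End.mul_apply]; rw [hα, ih]

lemma symm_commutes (f : V →ₗ[K] V) (α : V ≃ₗ[K] V) (hα : Commutes f α) :
    Commutes f α.symm := by
  intro v
  have h : f v = α (f (α.symm v)) := by rw [hα, α.apply_symm_apply]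
  rw [h, α.symm_apply_apply]

lemma one_le_ulm [FiniteDimensional K V] (h : V →ₗ[K] V) (q : ℕ) (x : V)
    (hker : h x = 0) (hmem : x ∈ LinearMap.range (h ^ q))
    (hnot : x ∉ LinearMap.range (h ^ (q + 1))) : 1 ≤ ulm h (q + 1) := by
  set S : Submodule K V := LinearMap.ker h ⊓ LinearMap.range (h ^ q) with hS
  set T := Submodule.comap S.subtype (LinearMap.ker h ⊓ LinearMap.range (h ^ (q + 1))) with hT
  have hxS : x ∈ S := ⟨hker, hmem⟩
  have hne : (Submodule.Quotient.mk ⟨x, hxS⟩ : S ⧸ T) ≠ 0 := by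
    intro h0
    rw [Submodule.Quotient.mk_eq_zero] at h0
    exact hnot h0.2
  have : Nontrivial (S ⧸ T) := nontrivial_of_ne _ _ hne
  have : 0 < Module.finrank K (S ⧸ T) := Module.finrank_pos
  exact this

lemma coe_restrict_pow_s16 (f : V →ₗ[K] V) {E : Submodule K V} (hE : ∀ x ∈ E, f x ∈ E)
    (q : ℕ) (x : E) : (((f.restrict hE) ^ q) x : V) = (f ^ q) (x : V) := by
  rw [Module.End.pow_restrict]; exact LinearMap.restrict_coe_apply _ _ _

lemma mem_range_restrict_pow_iff (f : V →ₗ[K] V) {E G : Submodule K V}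
    (hE : ∀ x ∈ E, f x ∈ E) (hG : ∀ x ∈ G, f x ∈ G) (hcompl : IsCompl E G) (q : ℕ) (x : E) :
    x ∈ LinearMap.range ((f.restrict hE) ^ q) ↔ (x : V) ∈ LinearMap.range (f ^ q) := by
  constructor
  · rintro ⟨e, rfl⟩
    exact ⟨e, (coe_restrict_pow_s16 f hE q e).symm⟩
  · rintro ⟨v, hv⟩
    have hv' : v ∈ E ⊔ G := by rw [hcompl.sup_eq_top]; trivial
    obtain ⟨e, he, g, hg, rfl⟩ := Submodule.mem_sup.mp hv'
    have h1 : (f ^ q) e ∈ E := Module.End.pow_apply_mem_of_forall_mem q hE e he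
    have h2 : (f ^ q) g ∈ G := Module.End.pow_apply_mem_of_forall_mem q hG g hg
    have hde : (x : V) - (f ^ q) e = (f ^ q) g := by
      rw [map_add] at hv; rw [← hv]; abel
    have hmemE : (x : V) - (f ^ q) e ∈ E := sub_mem x.2 h1
    have hmemG : (x : V) - (f ^ q) e ∈ G := hde ▸ h2
    have hzero : (x : V) - (f ^ q) e = 0 :=
      (Submodule.disjoint_def.mp hcompl.disjoint) _ hmemE hmemG
    refine ⟨⟨e, he⟩, Subtype.ext ?_⟩
    rw [coe_restrict_pow_s16]
    have : (x : V) = (f ^ q) e := by linear_combination (norm := abel) hzero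
    exact this.symm

lemma ker_coe (f : V →ₗ[K] V) {E : Submodule K V} (hE : ∀ x ∈ E, f x ∈ E)
    (x : E) : x ∈ LinearMap.ker (f.restrict hE) ↔ f (x : V) = 0 := by
  rw [LinearMap.mem_ker]
  constructor
  · intro h
    have := LinearMap.restrict_coe_apply f hE x
    rw [h] at this; exact this.symm ▸ rfl
  · intro h
    apply Subtype.ext
    rw [LinearMap.restrict_coe_apply]; exact h

/-- The natural map from the Ulm subquotient of an invariant subspace to
that of the ambient space. -/
noncomputable def ulmMap (f : V →ₗ[K] V) {E : Submodule K V} (hE : ∀ x ∈ E, f x ∈ E) (q : ℕ) :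
    ↥(LinearMap.ker (f.restrict hE) ⊓ LinearMap.range ((f.restrict hE) ^ q)) →ₗ[K]
      (↥(LinearMap.ker f ⊓ LinearMap.range (f ^ q)) ⧸
        Submodule.comap (LinearMap.ker f ⊓ LinearMap.range (f ^ q)).subtype
          (LinearMap.ker f ⊓ LinearMap.range (f ^ (q + 1)))) :=
  (Submodule.comap (LinearMap.ker f ⊓ LinearMap.range (f ^ q)).subtype
      (LinearMap.ker f ⊓ LinearMap.range (f ^ (q + 1)))).mkQ ∘ₗ
    LinearMap.codRestrict _ (E.subtype ∘ₗ Submodule.subtype _) (by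
      rintro ⟨x, hx1, hx2⟩
      constructor
      · simpa using (ker_coe f hE x).mp hx1
      · obtain ⟨e, rfl⟩ := hx2
        exact ⟨e, by simpa using (coe_restrict_pow_s16 f hE q e).symm⟩)

lemma ulmMap_apply (f : V →ₗ[K] V) {E : Submodule K V} (hE : ∀ x ∈ E, f x ∈ E) (q : ℕ)
    (x : ↥(LinearMap.ker (f.restrict hE) ⊓ LinearMap.range ((f.restrict hE) ^ q)))
    : ulmMap f hE q x = Submodule.Quotient.mk ⟨((x : E) : V), by
      constructor
      · exact (ker_coe f hE x).mp x.2.1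
      · obtain ⟨e, he⟩ := x.2.2
        exact ⟨e, by rw [← he]; exact (coe_restrict_pow_s16 f hE q e).symm⟩⟩ := by
  rfl

lemma ulmMap_ker (f : V →ₗ[K] V) {E G : Submodule K V}
    (hE : ∀ x ∈ E, f x ∈ E) (hG : ∀ x ∈ G, f x ∈ G) (hcompl : IsCompl E G) (q : ℕ) :
    LinearMap.ker (ulmMap f hE q) =
      Submodule.comap (LinearMap.ker (f.restrict hE) ⊓
          LinearMap.range ((f.restrict hE) ^ q)).subtype
        (LinearMap.ker (f.restrict hE) ⊓ LinearMap.range ((f.restrict hE) ^ (q + 1))) := by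
  ext x
  rw [LinearMap.mem_ker, ulmMap_apply, Submodule.Quotient.mk_eq_zero,
    Submodule.mem_comap, Submodule.mem_comap]
  constructor
  · rintro ⟨-, h2⟩
    exact ⟨x.2.1, (mem_range_restrict_pow_iff f hE hG hcompl (q + 1) _).mpr h2⟩
  · rintro ⟨h1, h2⟩
    exact ⟨(ker_coe f hE _).mp h1,
      (mem_range_restrict_pow_iff f hE hG hcompl (q + 1) _).mp h2⟩

lemma ulm_add_le [FiniteDimensional K V] (f : V →ₗ[K] V) {E G : Submodule K V}
    (hE : ∀ x ∈ E, f x ∈ E) (hG : ∀ x ∈ G, f x ∈ G) (hcompl : IsCompl E G) (q : ℕ) :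
    ulm (f.restrict hE) (q + 1) + ulm (f.restrict hG) (q + 1) ≤ ulm f (q + 1) := by
  classical
  have hkE := ulmMap_ker f hE hG hcompl q
  have hkG := ulmMap_ker f hG hE hcompl.symm q
  have hrkE : ulm (f.restrict hE) (q + 1) =
      finrank K (LinearMap.range (ulmMap f hE q)) := by
    rw [← (LinearMap.quotKerEquivRange (ulmMap f hE q)).finrank_eq, hkE]
    rfl
  have hrkG : ulm (f.restrict hG) (q + 1) =
      finrank K (LinearMap.range (ulmMap f hG q)) := by
    rw [← (LinearMap.quotKerEquivRange (ulmMap f hG q)).finrank_eq, hkG]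
    rfl
  have hdisj : LinearMap.range (ulmMap f hE q) ⊓ LinearMap.range (ulmMap f hG q) = ⊥ := by
    rw [eq_bot_iff]
    rintro ξ ⟨hξE, hξG⟩
    obtain ⟨x, hx⟩ := hξE
    obtain ⟨y, hy⟩ := hξG
    rw [ulmMap_apply] at hx hy
    have hxy : ((⟨((x : E) : V), _⟩ : ↥(LinearMap.ker f ⊓ LinearMap.range (f ^ q)))
        - ⟨((y : G) : V), _⟩) ∈ _ := (Submodule.Quotient.eq _).mp (hx.trans hy.symm)
    rw [Submodule.mem_comap] at hxy
    have hd : (((x : E) : V) - ((y : G) : V)) ∈ LinearMap.range (f ^ (q + 1)) := hxy.2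
    obtain ⟨v, hv⟩ := hd
    have hv' : v ∈ E ⊔ G := by rw [hcompl.sup_eq_top]; trivial
    obtain ⟨e, he, g, hg, rfl⟩ := Submodule.mem_sup.mp hv'
    rw [map_add] at hv
    have h1 : (f ^ (q + 1)) e ∈ E := Module.End.pow_apply_mem_of_forall_mem _ hE e he
    have h2 : (f ^ (q + 1)) g ∈ G := Module.End.pow_apply_mem_of_forall_mem _ hG g hg
    have heq : ((x : E) : V) - (f ^ (q + 1)) e = ((y : G) : V) + (f ^ (q + 1)) g := by
      have h0 : ((x : E) : V) - (f ^ (q + 1)) e - (((y : G) : V) + (f ^ (q + 1)) g)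
          = (((x : E) : V) - ((y : G) : V)) - ((f ^ (q + 1)) e + (f ^ (q + 1)) g) := by abel
      have h1' : ((x : E) : V) - (f ^ (q + 1)) e - (((y : G) : V) + (f ^ (q + 1)) g) = 0 := by
        rw [h0, ← hv]; exact sub_self _
      exact sub_eq_zero.mp h1'
    have hmE : ((x : E) : V) - (f ^ (q + 1)) e ∈ E := sub_mem (x : E).2 h1
    have hmG : ((x : E) : V) - (f ^ (q + 1)) e ∈ G := heq ▸ add_mem (y : G).2 h2
    have hz : ((x : E) : V) - (f ^ (q + 1)) e = 0 :=
      (Submodule.disjoint_def.mp hcompl.disjoint) _ hmE hmG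
    have hxr : ((x : E) : V) ∈ LinearMap.range (f ^ (q + 1)) :=
      ⟨e, (sub_eq_zero.mp hz).symm⟩
    have hx0 : ulmMap f hE q x = 0 := by
      rw [ulmMap_apply, Submodule.Quotient.mk_eq_zero, Submodule.mem_comap]
      exact ⟨(ker_coe f hE _).mp x.2.1, hxr⟩
    have hξ : ulmMap f hE q x = ξ := by rw [ulmMap_apply]; exact hx
    rw [Submodule.mem_bot, ← hξ]
    exact hx0
  have hsum : finrank K (LinearMap.range (ulmMap f hE q)) +
      finrank K (LinearMap.range (ulmMap f hG q)) ≤ ulm f (q + 1) := by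
    have h := Submodule.finrank_sup_add_finrank_inf_eq
      (LinearMap.range (ulmMap f hE q)) (LinearMap.range (ulmMap f hG q))
    rw [hdisj] at h
    simp only [finrank_bot, add_zero] at h
    rw [← h]
    exact Submodule.finrank_le _
  rw [hrkE, hrkG]
  exact hsum

end Aux


section Inj
variable {K V : Type*} [Field K] [AddCommGroup V] [Module K V]

lemma aMap_injective [FiniteDimensional K V] (f : V →ₗ[K] V) (hnil : IsNilpotent f)
    {E G : Submodule K V} (hE : ∀ x ∈ E, f x ∈ E) (hG : ∀ x ∈ G, f x ∈ G)
    (hcompl : IsCompl E G)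
    (hdG : ∀ t, 1 ≤ t → 1 < ulm f t → ulm (f.restrict hG) t = ulm f t)
    (α : V ≃ₗ[K] V) (hα : Commutes f α) :
    Function.Injective
      ((Submodule.projectionOnto E G hcompl) ∘ₗ ((α : V →ₗ[K] V) ∘ₗ E.subtype)) := by
  set a := (Submodule.projectionOnto E G hcompl) ∘ₗ ((α : V →ₗ[K] V) ∘ₗ E.subtype)
    with ha
  rw [← LinearMap.ker_eq_bot]
  by_contra hne
  obtain ⟨x₀, hx₀mem, hx₀ne⟩ := Submodule.exists_mem_ne_zero_of_ne_bot hne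
  obtain ⟨n, hn⟩ := hnil
  -- the kernel of a is invariant under f.restrict hE
  have hmemG : ∀ z : E, z ∈ LinearMap.ker a ↔ α (z : V) ∈ G := by
    intro z
    rw [LinearMap.mem_ker, ha, LinearMap.comp_apply, LinearMap.comp_apply,
      Submodule.linearProjOfIsCompl_apply_eq_zero_iff]
    rfl
  have hinv : ∀ z ∈ LinearMap.ker a, (f.restrict hE) z ∈ LinearMap.ker a := by
    intro z hz
    rw [hmemG] at hz ⊢
    rw [LinearMap.restrict_coe_apply, hα]
    exact hG _ hz
  -- find a nonzero element of the kernel killed by f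
  set S₁ := {j : ℕ | ((f.restrict hE) ^ j) x₀ ≠ 0} with hS₁
  have h0S₁ : 0 ∈ S₁ := by simpa [hS₁] using hx₀ne
  have hbdd₁ : BddAbove S₁ := by
    refine ⟨n, fun j hj => ?_⟩
    by_contra hjn
    push_neg at hjn
    apply hj
    apply Subtype.ext
    rw [coe_restrict_pow_s16]
    have : f ^ j = f ^ (j - n) * f ^ n := by rw [← pow_add, Nat.sub_add_cancel hjn.le]
    rw [this, Module.End.mul_apply, hn]
    simp
  set k := sSup S₁ with hk
  have hkS₁ : k ∈ S₁ := Nat.sSup_mem ⟨0, h0S₁⟩ hbdd₁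
  have hk1 : k + 1 ∉ S₁ := fun h => by
    have := le_csSup hbdd₁ h
    omega
  set x : E := ((f.restrict hE) ^ k) x₀ with hx
  have hxne : x ≠ 0 := hkS₁
  have hfx : (f.restrict hE) x = 0 := by
    have h1 : ((f.restrict hE) ^ (k + 1)) x₀ = 0 := not_not.mp hk1
    rw [pow_succ'] at h1
    exact h1
  have hxker : x ∈ LinearMap.ker a :=
    Module.End.pow_apply_mem_of_forall_mem k hinv x₀ hx₀mem
  have hxVne : (x : V) ≠ 0 := fun h => hxne (Subtype.ext h)
  have hfxV : f (x : V) = 0 := by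
    rw [← LinearMap.restrict_coe_apply f hE x, hfx]; rfl
  have hαxG : α (x : V) ∈ G := (hmemG x).mp hxker
  have hfαx : f (α (x : V)) = 0 := by rw [← hα, hfxV, map_zero]
  -- the height of x
  set S₂ := {j : ℕ | (x : V) ∈ LinearMap.range (f ^ j)} with hS₂
  have h0S₂ : 0 ∈ S₂ := ⟨(x : V), by simp⟩
  have hbdd₂ : BddAbove S₂ := by
    refine ⟨n, fun j hj => ?_⟩
    by_contra hjn
    push_neg at hjn
    obtain ⟨v, hv⟩ := hj
    apply hxVne
    have : f ^ j = f ^ (j - n) * f ^ n := by rw [← pow_add, Nat.sub_add_cancel hjn.le]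
    rw [← hv, this, Module.End.mul_apply, hn]
    simp
  set q := sSup S₂ with hq
  have hqS₂ : q ∈ S₂ := Nat.sSup_mem ⟨0, h0S₂⟩ hbdd₂
  have hq1 : q + 1 ∉ S₂ := fun h => by
    have := le_csSup hbdd₂ h
    omega
  -- α x has the same height
  have hy_mem : α (x : V) ∈ LinearMap.range (f ^ q) := by
    obtain ⟨v, hv⟩ := hqS₂
    exact ⟨α v, by rw [← comm_pow f α hα, hv]⟩
  have hy_not : α (x : V) ∉ LinearMap.range (f ^ (q + 1)) := by
    rintro ⟨w, hw⟩
    apply hq1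
    refine ⟨α.symm w, ?_⟩
    rw [← comm_pow f α.symm (symm_commutes f α hα), hw, α.symm_apply_apply]
  -- Ulm invariant bounds
  have h1 : 1 ≤ ulm (f.restrict hE) (q + 1) := by
    apply one_le_ulm (f.restrict hE) q x hfx
    · exact (mem_range_restrict_pow_iff f hE hG hcompl q x).mpr hqS₂
    · intro hmem
      exact hq1 ((mem_range_restrict_pow_iff f hE hG hcompl (q + 1) x).mp hmem)
  have h2 : 1 ≤ ulm (f.restrict hG) (q + 1) := by
    apply one_le_ulm (f.restrict hG) q ⟨α (x : V), hαxG⟩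
    · exact (ker_coe f hG _).mpr hfαx
    · exact (mem_range_restrict_pow_iff f hG hE hcompl.symm q _).mpr hy_mem
    · intro hmem
      exact hy_not ((mem_range_restrict_pow_iff f hG hE hcompl.symm (q + 1) _).mp hmem)
  have h3 := ulm_add_le f hE hG hcompl q
  have h4 : 1 < ulm f (q + 1) := by omega
  have h5 := hdG (q + 1) (by omega) h4
  omega

end Inj


theorem stmt16 {K V : Type*} [Field K] [AddCommGroup V] [Module K V]
    [FiniteDimensional K V] (f : V →ₗ[K] V) (hf : IsNilpotent f)
    (E G : Submodule K V) (hE : ∀ x ∈ E, f x ∈ E) (hG : ∀ x ∈ G, f x ∈ G)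
    (hcompl : IsCompl E G)
    (hdE : ∀ t, 1 ≤ t → ulm f t = 1 → ulm (f.restrict hE) t = ulm f t)
    (hdG : ∀ t, 1 ≤ t → 1 < ulm f t → ulm (f.restrict hG) t = ulm f t)
    (Y : Submodule K E) (hY : Charinv (f.restrict hE) Y)
    (Ys : Submodule K E) (hYs : Ys ≤ Y)
    (W : Submodule K V) (hW : W ≤ G)
    (hchar : Charinv f (Submodule.map E.subtype Ys ⊔ W)) :
    charHull f ((Submodule.map E.subtype Y ⊔ W : Submodule K V) : Set V) ⊓ E =
        Submodule.map E.subtype Y ∧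
      (¬ Hyperinv (f.restrict hE) Y →
        ¬ Hyperinv f
          (charHull f ((Submodule.map E.subtype Y ⊔ W : Submodule K V) : Set V))) := by
  set π := Submodule.projectionOnto E G hcompl with hπ
  set A := Submodule.map E.subtype Y with hA
  set hull := charHull f ((A ⊔ W : Submodule K V) : Set V) with hhull
  have hsub : (A ⊔ W : Submodule K V) ≤ hull := by
    rw [hhull, charHull]
    intro v hv
    apply Submodule.subset_span
    exact ⟨v, hv, 0, LinearEquiv.refl K V, fun w => rfl, by simp⟩
  have projG : ∀ v : V, v ∈ G → π v = 0 := fun v hv =>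
    Submodule.projectionOnto_apply_of_mem_right hcompl hv
  have hsubE : ∀ v : V, v - ↑(π v) ∈ G := by
    intro v
    have h0 : π (v - ↑(π v)) = 0 := by
      rw [map_sub, Submodule.linearProjOfIsCompl_apply_left]
      exact sub_self _
    exact (Submodule.linearProjOfIsCompl_apply_eq_zero_iff hcompl).mp h0
  have projf : ∀ v : V, π (f v) = (f.restrict hE) (π v) := by
    intro v
    have hdec : f v = f ↑(π v) + f (v - ↑(π v)) := by rw [← map_add]; congr 1; abel
    rw [hdec, map_add, projG _ (hG _ (hsubE v)), add_zero]
    have h1 : f ↑(π v) = ↑((f.restrict hE) (π v)) :=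
      (LinearMap.restrict_coe_apply f hE (π v)).symm
    rw [h1, Submodule.linearProjOfIsCompl_apply_left]
  have key : ∀ (α : V ≃ₗ[K] V), Commutes f α → ∀ y ∈ Y, π (α ↑y) ∈ Y := by
    intro α hα y hy
    set a := π ∘ₗ ((α : V →ₗ[K] V) ∘ₗ E.subtype) with haa
    have hinj : Function.Injective a := aMap_injective f hf hE hG hcompl hdG α hα
    have hsurj : Function.Surjective a := LinearMap.surjective_of_injective hinj
    let e : E ≃ₗ[K] E := LinearEquiv.ofBijective a ⟨hinj, hsurj⟩
    have hcomm : Commutes (f.restrict hE) e := by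
      intro z
      show a ((f.restrict hE) z) = (f.restrict hE) (a z)
      simp only [haa, LinearMap.comp_apply]
      have h1 : (E.subtype ((f.restrict hE) z) : V) = f (E.subtype z) :=
        LinearMap.restrict_coe_apply f hE z
      rw [h1, LinearEquiv.coe_coe, hα, projf]
    exact hY.2 e hcomm y hy
  have hAG : ∀ v ∈ (A ⊔ G : Submodule K V), f v ∈ (A ⊔ G : Submodule K V) := by
    intro v hv
    obtain ⟨p, hp, g, hg, rfl⟩ := Submodule.mem_sup.mp hv
    rw [map_add]
    refine Submodule.add_mem _ ?_ (Submodule.mem_sup_right (hG _ hg))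
    obtain ⟨y, hy, rfl⟩ := hp
    have h1 : f (E.subtype y) = E.subtype ((f.restrict hE) y) :=
      (LinearMap.restrict_coe_apply f hE y).symm
    rw [h1]
    exact Submodule.mem_sup_left (Submodule.mem_map_of_mem (hY.1 y hy))
  have hhullAG : hull ≤ A ⊔ G := by
    rw [hhull, charHull]
    apply Submodule.span_le.mpr
    rintro v ⟨b, hb, i, α, hαc, rfl⟩
    apply Module.End.pow_apply_mem_of_forall_mem i hAG
    obtain ⟨p, hp, w, hw, rfl⟩ := Submodule.mem_sup.mp hb
    rw [map_add]
    refine Submodule.add_mem _ ?_ ?_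
    · obtain ⟨y, hy, rfl⟩ := hp
      have h1 : π (α (E.subtype y)) ∈ Y := key α hαc y hy
      have hdecomp : α (E.subtype y) =
          ↑(π (α (E.subtype y))) + (α (E.subtype y) - ↑(π (α (E.subtype y)))) := by abel
      rw [hdecomp]
      exact Submodule.add_mem _ (Submodule.mem_sup_left (Submodule.mem_map_of_mem h1))
        (Submodule.mem_sup_right (hsubE _))
    · have h2 : α w ∈ Submodule.map E.subtype Ys ⊔ W :=
        hchar.2 α hαc w (Submodule.mem_sup_right hw)
      have h3 : Submodule.map E.subtype Ys ⊔ W ≤ A ⊔ G :=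
        sup_le_sup (Submodule.map_mono hYs) hW
      exact h3 h2
  have hGE : G ⊓ E = ⊥ := disjoint_iff.mp hcompl.symm.disjoint
  have hmain : hull ⊓ E = A := by
    apply le_antisymm
    · calc hull ⊓ E ≤ (A ⊔ G) ⊓ E := inf_le_inf_right _ hhullAG
        _ = A ⊔ (G ⊓ E) := sup_inf_assoc_of_le _ (Submodule.map_subtype_le E Y)
        _ = A := by rw [hGE, sup_bot_eq]
    · exact le_inf (le_trans le_sup_left hsub) (Submodule.map_subtype_le E Y)
  refine ⟨hmain, ?_⟩
  intro hnotH hHyp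
  apply hnotH
  intro g hg y hy
  set gV : V →ₗ[K] V := E.subtype ∘ₗ (g ∘ₗ π) with hgV
  have hgVcomm : ∀ v, gV (f v) = f (gV v) := by
    intro v
    simp only [hgV, LinearMap.comp_apply]
    rw [projf, hg]
    exact LinearMap.restrict_coe_apply f hE (g (π v))
  have hyhull : E.subtype y ∈ hull :=
    hsub (Submodule.mem_sup_left (Submodule.mem_map_of_mem hy))
  have h2 := hHyp gV hgVcomm _ hyhull
  have h3 : gV (E.subtype y) = E.subtype (g y) := by
    simp only [hgV, LinearMap.comp_apply]
    congr 2
    exact Submodule.linearProjOfIsCompl_apply_left hcompl y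
  rw [h3] at h2
  have h4 : E.subtype (g y) ∈ A := by
    rw [← hmain]
    exact Submodule.mem_inf.mpr ⟨h2, (g y).2⟩
  obtain ⟨y', hy', he⟩ := h4
  have h5 : y' = g y := Submodule.injective_subtype E he
  rw [← h5]
  exact hy'
end

section
/- Let (u_1, …, u_m) be a generator tuple of V with e(u_i) = t_i, and suppose f has no unrepeated elementary divisors, i.e. d(f, t_i) > 1 for all i = 1, …, m. Then a subspace X ⊆ V is hyperinvariant if and only if X = ⟨f^{r_1}(u_1) + ⋯ + f^{r_m}(u_m)⟩^c for some integers r_1, …, r_m satisfying 0 ≤ r_1 ≤ ⋯ ≤ r_m and 0 ≤ t_1 − r_1 ≤ ⋯ ≤ t_m − r_m. -/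
open Module LinearMap

namespace Stmt17

variable {K V : Type*} [Field K] [AddCommGroup V] [Module K V]
variable (f : V →ₗ[K] V)

lemma pow_apply_pow (a b : ℕ) (x : V) : (f ^ a) ((f ^ b) x) = (f ^ (a + b)) x := by
  rw [pow_add, Module.End.mul_apply]

lemma expnt_apply (hf : IsNilpotent f) (x : V) : (f ^ expnt f x) x = 0 := by
  obtain ⟨n, hn⟩ := hf
  have hne : {ℓ : ℕ | (f ^ ℓ) x = 0}.Nonempty := ⟨n, show (f ^ n) x = 0 by rw [hn]; rfl⟩
  exact Nat.sInf_mem hne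

lemma apply_eq_zero_of_expnt_le (hf : IsNilpotent f) {x : V} {k : ℕ}
    (h : expnt f x ≤ k) : (f ^ k) x = 0 := by
  obtain ⟨d, rfl⟩ := Nat.exists_eq_add_of_le h
  rw [add_comm, ← pow_apply_pow, expnt_apply f hf x, map_zero]

lemma expnt_le_iff (hf : IsNilpotent f) {x : V} {k : ℕ} :
    expnt f x ≤ k ↔ (f ^ k) x = 0 :=
  ⟨apply_eq_zero_of_expnt_le f hf, fun h => Nat.sInf_le h⟩

lemma apply_ne_zero_of_lt_expnt {x : V} {k : ℕ} (h : k < expnt f x) :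
    (f ^ k) x ≠ 0 := by
  intro h0
  have h1 : expnt f x ≤ k := Nat.sInf_le h0
  omega

lemma li_cyc (hf : IsNilpotent f) (x : V) :
    LinearIndependent K (fun k : Fin (expnt f x) => (f ^ (k : ℕ)) x) := by
  classical
  set e := expnt f x with he
  rw [Fintype.linearIndependent_iff]
  intro g hsum
  by_contra hcon
  push_neg at hcon
  obtain ⟨k1, hk1⟩ := hcon
  set s : Finset (Fin e) := Finset.univ.filter (fun k => g k ≠ 0) with hs
  have hne : s.Nonempty := ⟨k1, by simp [hs, hk1]⟩
  set k0 := s.min' hne with hk0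
  have hk0s : k0 ∈ s := s.min'_mem hne
  have hgk0 : g k0 ≠ 0 := by simpa [hs] using hk0s
  have := congrArg (f ^ (e - 1 - (k0 : ℕ))) hsum
  rw [map_sum, map_zero] at this
  have hterm : ∀ k : Fin e, k ≠ k0 →
      (f ^ (e - 1 - (k0 : ℕ))) (g k • (f ^ (k : ℕ)) x) = 0 := by
    intro k hk
    by_cases hg : g k = 0
    · simp [hg]
    · have hks : k ∈ s := by simp [hs, hg]
      have hle : k0 ≤ k := s.min'_le k hks
      have hlt : (k0 : ℕ) < (k : ℕ) := by
        rcases lt_or_eq_of_le hle with h | h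
        · exact h
        · exact absurd h.symm hk
      rw [map_smul, pow_apply_pow]
      have : (f ^ (e - 1 - (k0 : ℕ) + (k : ℕ))) x = 0 := by
        apply apply_eq_zero_of_expnt_le f hf
        have : (k : ℕ) < e := k.2
        omega
      rw [this, smul_zero]
  rw [Finset.sum_eq_single k0 (fun k _ hk => hterm k hk) (by simp)] at this
  rw [map_smul, pow_apply_pow] at this
  have hexp : e - 1 - (k0 : ℕ) + (k0 : ℕ) = e - 1 := by
    have : (k0 : ℕ) < e := k0.2
    omega
  rw [hexp] at this
  have hne0 : (f ^ (e - 1)) x ≠ 0 := by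
    apply apply_ne_zero_of_lt_expnt
    have : (k0 : ℕ) < e := k0.2
    omega
  rcases smul_eq_zero.mp this with h | h
  · exact hgk0 h
  · exact hne0 h

lemma cyc_eq_span_fin (hf : IsNilpotent f) (x : V) :
    cyc f x = Submodule.span K (Set.range fun k : Fin (expnt f x) => (f ^ (k : ℕ)) x) := by
  apply le_antisymm
  · rw [cyc, Submodule.span_le]
    rintro - ⟨n, rfl⟩
    show (f ^ n) x ∈ _
    by_cases h : n < expnt f x
    · exact Submodule.subset_span ⟨⟨n, h⟩, rfl⟩
    · rw [apply_eq_zero_of_expnt_le f hf (show expnt f x ≤ n by omega)]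
      exact Submodule.zero_mem _
  · rw [Submodule.span_le]
    rintro - ⟨k, rfl⟩
    exact Submodule.subset_span ⟨(k : ℕ), rfl⟩

noncomputable def cycBasis (hf : IsNilpotent f) (x : V) :
    Basis (Fin (expnt f x)) K ↥(cyc f x) :=
  (Basis.span (li_cyc f hf x)).map (LinearEquiv.ofEq _ _ (cyc_eq_span_fin f hf x).symm)

lemma cycBasis_coe (hf : IsNilpotent f) (x : V) (k : Fin (expnt f x)) :
    (cycBasis f hf x k : V) = (f ^ (k : ℕ)) x := by
  simp [cycBasis, Basis.span_apply]

lemma apply_pow (k : ℕ) (x : V) : f ((f ^ k) x) = (f ^ (k + 1)) x := by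
  rw [pow_succ', Module.End.mul_apply]

lemma comm_pow {g : V →ₗ[K] V} (hg : ∀ v, g (f v) = f (g v)) (s : ℕ) (v : V) :
    g ((f ^ s) v) = (f ^ s) (g v) := by
  induction s with
  | zero => simp
  | succ n ih => rw [← apply_pow, ← apply_pow, hg, ih]

lemma pow_comm_f (s : ℕ) (v : V) : (f ^ s) (f v) = f ((f ^ s) v) := by
  rw [apply_pow f s v]
  conv_lhs => rw [show f v = (f ^ 1) v from by rw [pow_one]]
  rw [pow_apply_pow]

section Tuple

variable {f : V →ₗ[K] V} (hf : IsNilpotent f) {m : ℕ} {u : Fin m → V} (hU : IsGenTuple f u)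

/-- The collected basis `f^k (u i)`. -/
noncomputable def tb : Basis (Σ i : Fin m, Fin (expnt f (u i))) K V :=
  hU.1.collectedBasis (fun i => cycBasis f hf (u i))

lemma tb_coe (p : Σ i : Fin m, Fin (expnt f (u i))) :
    tb hf hU p = (f ^ (p.2 : ℕ)) (u p.1) := by
  rw [show tb hf hU p = ((cycBasis f hf (u p.1)) p.2 : V) from
    congrFun (DirectSum.IsInternal.collectedBasis_coe hU.1 _) p]
  exact cycBasis_coe f hf (u p.1) p.2

/-- The endomorphism sending `f^k (u i)` to `f^k (w i)`. -/
noncomputable def stdMap (w : Fin m → V) : V →ₗ[K] V :=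
  (tb hf hU).constr K (fun p => (f ^ (p.2 : ℕ)) (w p.1))

lemma stdMap_tb (w : Fin m → V) (p : Σ i : Fin m, Fin (expnt f (u i))) :
    stdMap hf hU w (tb hf hU p) = (f ^ (p.2 : ℕ)) (w p.1) :=
  Basis.constr_basis _ _ _ _

lemma stdMap_comm (w : Fin m → V) (hw : ∀ i, (f ^ expnt f (u i)) (w i) = 0) (v : V) :
    stdMap hf hU w (f v) = f (stdMap hf hU w v) := by
  have h : (stdMap hf hU w) ∘ₗ f = f ∘ₗ (stdMap hf hU w) := by
    apply Basis.ext (tb hf hU)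
    rintro ⟨i, k⟩
    simp only [LinearMap.comp_apply]
    rw [stdMap_tb, tb_coe, apply_pow]
    by_cases hk : (k : ℕ) + 1 < expnt f (u i)
    · have h1 : (f ^ ((k : ℕ) + 1)) (u i) = tb hf hU ⟨i, ⟨(k : ℕ) + 1, hk⟩⟩ :=
        (tb_coe hf hU ⟨i, ⟨(k : ℕ) + 1, hk⟩⟩).symm
      rw [h1, stdMap_tb, apply_pow]
    · have hk2 : (k : ℕ) + 1 = expnt f (u i) := by have := k.2; omega
      have h1 : (f ^ ((k : ℕ) + 1)) (u i) = 0 := by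
        rw [hk2]; exact expnt_apply f hf (u i)
      rw [h1, map_zero, apply_pow, hk2, hw i]
  exact congrFun (congrArg DFunLike.coe h) v

lemma stdMap_comm_pow (w : Fin m → V) (hw : ∀ i, (f ^ expnt f (u i)) (w i) = 0)
    (s : ℕ) (v : V) : stdMap hf hU w ((f ^ s) v) = (f ^ s) (stdMap hf hU w v) := by
  induction s with
  | zero => simp
  | succ n ih =>
    rw [← apply_pow, ← apply_pow, stdMap_comm hf hU w hw, ih]

lemma stdMap_u (w : Fin m → V) {i : Fin m} (hi : 0 < expnt f (u i)) :
    stdMap hf hU w (u i) = w i := by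
  have h1 : u i = tb hf hU ⟨i, ⟨0, hi⟩⟩ := by rw [tb_coe]; simp
  rw [h1, stdMap_tb]
  simp

lemma stdMap_id (v : V) : stdMap hf hU u v = v := by
  have h : stdMap hf hU u = LinearMap.id := by
    apply Basis.ext (tb hf hU)
    rintro ⟨i, k⟩
    rw [stdMap_tb, tb_coe, LinearMap.id_apply]
  rw [h, LinearMap.id_apply]

lemma stdMap_comp (w w' : Fin m → V) (hw : ∀ i, (f ^ expnt f (u i)) (w i) = 0)
    (h1 : ∀ i, stdMap hf hU w (w' i) = u i) :
    (stdMap hf hU w) ∘ₗ (stdMap hf hU w') = LinearMap.id := by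
  apply Basis.ext (tb hf hU)
  rintro ⟨i, k⟩
  rw [LinearMap.comp_apply, stdMap_tb, stdMap_comm_pow hf hU w hw, h1, LinearMap.id_apply,
    tb_coe]

/-- An automorphism commuting with `f` built from targets. -/
noncomputable def stdAuto (w w' : Fin m → V)
    (hw : ∀ i, (f ^ expnt f (u i)) (w i) = 0)
    (hw' : ∀ i, (f ^ expnt f (u i)) (w' i) = 0)
    (h1 : ∀ i, stdMap hf hU w (w' i) = u i)
    (h2 : ∀ i, stdMap hf hU w' (w i) = u i) : V ≃ₗ[K] V :=
  LinearEquiv.ofLinear (stdMap hf hU w) (stdMap hf hU w')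
    (stdMap_comp hf hU w w' hw h1) (stdMap_comp hf hU w' w hw' h2)

lemma stdAuto_apply (w w' : Fin m → V) (hw : ∀ i, (f ^ expnt f (u i)) (w i) = 0)
    (hw' : ∀ i, (f ^ expnt f (u i)) (w' i) = 0)
    (h1 : ∀ i, stdMap hf hU w (w' i) = u i)
    (h2 : ∀ i, stdMap hf hU w' (w i) = u i) (v : V) :
    stdAuto hf hU w w' hw hw' h1 h2 v = stdMap hf hU w v := rfl

lemma stdAuto_commutes (w w' : Fin m → V) (hw : ∀ i, (f ^ expnt f (u i)) (w i) = 0)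
    (hw' : ∀ i, (f ^ expnt f (u i)) (w' i) = 0)
    (h1 : ∀ i, stdMap hf hU w (w' i) = u i)
    (h2 : ∀ i, stdMap hf hU w' (w i) = u i) :
    Commutes f (stdAuto hf hU w w' hw hw' h1 h2) := fun v => stdMap_comm hf hU w hw v

/-- span of a set of basis vectors -/
noncomputable def SP (S : Set (Σ i : Fin m, Fin (expnt f (u i)))) : Submodule K V :=
  Submodule.span K (tb hf hU '' S)

lemma mem_SP {S : Set (Σ i : Fin m, Fin (expnt f (u i)))} {x : V} :
    x ∈ SP hf hU S ↔ ∀ p ∉ S, (tb hf hU).repr x p = 0 := by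
  rw [SP, Basis.mem_span_image]
  constructor
  · intro h p hp
    by_contra h0
    exact hp (h (Finsupp.mem_support_iff.mpr h0))
  · intro h p hp
    by_contra h0
    exact Finsupp.mem_support_iff.mp hp (h p h0)

lemma SP_mono {S T : Set (Σ i : Fin m, Fin (expnt f (u i)))} (h : S ⊆ T) :
    SP hf hU S ≤ SP hf hU T :=
  Submodule.span_mono (Set.image_mono h)

lemma SP_inf (S T : Set (Σ i : Fin m, Fin (expnt f (u i)))) :
    SP hf hU S ⊓ SP hf hU T = SP hf hU (S ∩ T) := by
  apply le_antisymm
  · intro x hx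
    rw [Submodule.mem_inf, mem_SP, mem_SP] at hx
    rw [mem_SP]
    intro p hp
    rcases not_and_or.mp hp with h | h
    · exact hx.1 p h
    · exact hx.2 p h
  · exact le_inf (SP_mono hf hU Set.inter_subset_left)
      (SP_mono hf hU Set.inter_subset_right)

lemma tb_mem_SP {S : Set (Σ i : Fin m, Fin (expnt f (u i)))}
    {p : Σ i : Fin m, Fin (expnt f (u i))} (hp : p ∈ S) : tb hf hU p ∈ SP hf hU S :=
  Submodule.subset_span ⟨p, hp, rfl⟩

lemma pow_tb (s : ℕ) (p : Σ i : Fin m, Fin (expnt f (u i))) :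
    (f ^ s) (tb hf hU p) =
      if h : (p.2 : ℕ) + s < expnt f (u p.1) then tb hf hU ⟨p.1, ⟨(p.2 : ℕ) + s, h⟩⟩
      else 0 := by
  rw [tb_coe, pow_apply_pow]
  have hc : s + (p.2 : ℕ) = (p.2 : ℕ) + s := Nat.add_comm _ _
  rw [hc]
  split_ifs with h
  · rw [tb_coe]
  · exact apply_eq_zero_of_expnt_le f hf (by omega)

lemma pow_mem_SP {s : ℕ} {S S' : Set (Σ i : Fin m, Fin (expnt f (u i)))}
    (h : ∀ p ∈ S, ∀ hlt : (p.2 : ℕ) + s < expnt f (u p.1),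
      (⟨p.1, ⟨(p.2 : ℕ) + s, hlt⟩⟩ : Σ i : Fin m, Fin (expnt f (u i))) ∈ S')
    {x : V} (hx : x ∈ SP hf hU S) : (f ^ s) x ∈ SP hf hU S' := by
  have hmap : (f ^ s) x ∈ Submodule.map (f ^ s) (SP hf hU S) :=
    Submodule.mem_map_of_mem hx
  rw [SP, Submodule.map_span] at hmap
  refine Submodule.span_le.mpr ?_ hmap
  rintro - ⟨-, ⟨p, hp, rfl⟩, rfl⟩
  show (f ^ s) (tb hf hU p) ∈ SP hf hU S'
  rw [pow_tb]
  split_ifs with hlt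
  · exact tb_mem_SP hf hU (h p hp hlt)
  · exact Submodule.zero_mem _

lemma SP_univ : SP hf hU Set.univ = ⊤ := by
  rw [SP, Set.image_univ, Basis.span_eq]

lemma repr_pow (x : V) (s : ℕ) (j : Fin m) (l : Fin (expnt f (u j)))
    (h : (l : ℕ) + s < expnt f (u j)) :
    (tb hf hU).repr ((f ^ s) x) ⟨j, ⟨(l : ℕ) + s, h⟩⟩ = (tb hf hU).repr x ⟨j, l⟩ := by
  classical
  set b := tb hf hU with hb
  set q : Σ i : Fin m, Fin (expnt f (u i)) := ⟨j, ⟨(l : ℕ) + s, h⟩⟩ with hq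
  have hx : x = ∑ p, b.repr x p • b p := (Basis.sum_repr b x).symm
  have step1 : b.repr ((f ^ s) x) q = ∑ p, b.repr x p * b.repr ((f ^ s) (b p)) q := by
    conv_lhs => rw [hx]
    rw [map_sum, map_sum, Finsupp.finset_sum_apply]
    refine Finset.sum_congr rfl fun p _ => ?_
    rw [map_smul, map_smul, Finsupp.smul_apply, smul_eq_mul]
  rw [step1]
  have step2 : b.repr ((f ^ s) (b ⟨j, l⟩)) q = 1 := by
    rw [hb, pow_tb hf hU s ⟨j, l⟩]
    dsimp only
    rw [dif_pos h, Basis.repr_self, hq, Finsupp.single_eq_same]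
  rw [Finset.sum_eq_single (⟨j, l⟩ : Σ i : Fin m, Fin (expnt f (u i)))]
  · rw [step2, mul_one]
  · rintro ⟨j', l'⟩ - hne
    rw [hb, pow_tb hf hU s ⟨j', l'⟩]
    dsimp only
    split_ifs with hlt
    · rw [Basis.repr_self, Finsupp.single_apply, if_neg, mul_zero]
      intro hEq
      apply hne
      have hfst : j' = j := congrArg Sigma.fst hEq
      subst hfst
      have hsnd := eq_of_heq (Sigma.mk.inj_iff.mp hEq).2
      have hval : (l' : ℕ) + s = (l : ℕ) + s := congrArg Fin.val hsnd
      have : l' = l := Fin.ext (by omega)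
      rw [this]
    · rw [map_zero, Finsupp.coe_zero, Pi.zero_apply, mul_zero]
  · intro hmem
    exact absurd (Finset.mem_univ _) hmem

lemma ker_pow (s : ℕ) :
    LinearMap.ker (f ^ s) = SP hf hU {p | expnt f (u p.1) ≤ (p.2 : ℕ) + s} := by
  apply le_antisymm
  · intro x hx
    rw [mem_SP]
    rintro ⟨j, l⟩ hp
    simp only [Set.mem_setOf_eq, not_le] at hp
    rw [← repr_pow hf hU x s j l hp, LinearMap.mem_ker.mp hx, map_zero,
      Finsupp.coe_zero, Pi.zero_apply]
  · rw [SP, Submodule.span_le]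
    rintro - ⟨⟨j, l⟩, hp, rfl⟩
    rw [SetLike.mem_coe, LinearMap.mem_ker, pow_tb]
    simp only [Set.mem_setOf_eq] at hp
    rw [dif_neg (by dsimp only; omega)]

lemma range_pow (s : ℕ) :
    LinearMap.range (f ^ s) = SP hf hU {p | s ≤ (p.2 : ℕ)} := by
  apply le_antisymm
  · rintro - ⟨y, rfl⟩
    have hy : y ∈ SP hf hU Set.univ := by rw [SP_univ]; trivial
    exact pow_mem_SP hf hU (fun p _ hlt => by simp) hy
  · rw [SP, Submodule.span_le]
    rintro - ⟨⟨j, l⟩, hp, rfl⟩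
    simp only [Set.mem_setOf_eq] at hp
    refine ⟨(f ^ ((l : ℕ) - s)) (u j), ?_⟩
    rw [pow_apply_pow]
    have hc : s + ((l : ℕ) - s) = (l : ℕ) := by omega
    rw [hc, tb_coe]

lemma finrank_SP (S : Set (Σ i : Fin m, Fin (expnt f (u i)))) :
    finrank K ↥(SP hf hU S) = Nat.card S := by
  haveI : Fintype S := Fintype.ofFinite _
  have hli : LinearIndependent K (fun p : S => tb hf hU (p : Σ i : Fin m, Fin (expnt f (u i)))) :=
    (tb hf hU).linearIndependent.comp _ Subtype.val_injective
  have hSP : SP hf hU S =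
      Submodule.span K (Set.range fun p : S => tb hf hU (p : Σ i : Fin m, Fin (expnt f (u i)))) := by
    rw [SP, Set.image_eq_range]
  rw [hSP, finrank_span_eq_card hli, Nat.card_eq_fintype_card]

lemma finrank_quot [FiniteDimensional K V] (W W' : Submodule K V) (h : W' ≤ W) :
    finrank K (↥W ⧸ Submodule.comap W.subtype W') = finrank K ↥W - finrank K ↥W' := by
  have h1 := Submodule.finrank_quotient_add_finrank (Submodule.comap W.subtype W')
  have h2 : finrank K ↥(Submodule.comap W.subtype W') = finrank K ↥W' :=
    (Submodule.comapSubtypeEquivOfLe h).finrank_eq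
  omega

lemma ulm_zero [FiniteDimensional K V] : ulm f 0 = 0 := by
  unfold ulm
  rw [finrank_quot _ _ (le_of_eq (by rw [Nat.zero_sub]))]
  rw [Nat.zero_sub, Nat.sub_self]

include hf hU in
lemma ulm_eq_card [FiniteDimensional K V] {r : ℕ} (hr : 1 ≤ r) :
    ulm f r = Nat.card {j : Fin m // expnt f (u j) = r} := by
  classical
  set S1 : Set (Σ i : Fin m, Fin (expnt f (u i))) :=
    {p | expnt f (u p.1) ≤ (p.2 : ℕ) + 1 ∧ r - 1 ≤ (p.2 : ℕ)} with hS1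
  set S2 : Set (Σ i : Fin m, Fin (expnt f (u i))) :=
    {p | expnt f (u p.1) ≤ (p.2 : ℕ) + 1 ∧ r ≤ (p.2 : ℕ)} with hS2
  have hker : LinearMap.ker f = LinearMap.ker (f ^ 1) := by rw [pow_one]
  have h1 : LinearMap.ker f ⊓ LinearMap.range (f ^ (r - 1)) = SP hf hU S1 := by
    rw [hker, ker_pow hf hU, range_pow hf hU, SP_inf]
    congr 1
  have h2 : LinearMap.ker f ⊓ LinearMap.range (f ^ r) = SP hf hU S2 := by
    rw [hker, ker_pow hf hU, range_pow hf hU, SP_inf]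
    congr 1
  have hsub : S2 ⊆ S1 := fun p hp => ⟨hp.1, by have := hp.2; omega⟩
  have hle : SP hf hU S2 ≤ SP hf hU S1 := SP_mono hf hU hsub
  unfold ulm
  have key : ∀ A B : Submodule K V, A = SP hf hU S1 → B = SP hf hU S2 →
      finrank K (↥A ⧸ Submodule.comap A.subtype B) =
        Nat.card {j : Fin m // expnt f (u j) = r} := by
    rintro A B rfl rfl
    rw [finrank_quot _ _ hle, finrank_SP, finrank_SP]
    rw [Nat.card_coe_set_eq, Nat.card_coe_set_eq]
    rw [← Set.ncard_diff hsub]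
    have hD : S1 \ S2 = {p : Σ i : Fin m, Fin (expnt f (u i)) |
        expnt f (u p.1) = r ∧ (p.2 : ℕ) + 1 = r} := by
      ext ⟨j, l⟩
      simp only [Set.mem_diff, hS1, hS2, Set.mem_setOf_eq, not_and, not_le]
      have hl := l.2
      constructor
      · rintro ⟨⟨ha, hb⟩, hc⟩
        have := hc ha
        omega
      · rintro ⟨ha, hb⟩
        omega
    rw [hD]
    have himg : {j : Fin m | expnt f (u j) = r} =
        Sigma.fst '' {p : Σ i : Fin m, Fin (expnt f (u i)) |
          expnt f (u p.1) = r ∧ (p.2 : ℕ) + 1 = r} := by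
      ext j
      simp only [Set.mem_setOf_eq, Set.mem_image]
      constructor
      · intro hj
        exact ⟨⟨j, ⟨r - 1, by omega⟩⟩, ⟨by simpa using hj, by dsimp only; omega⟩, rfl⟩
      · rintro ⟨⟨j', l'⟩, ⟨ha, hb⟩, rfl⟩
        exact ha
    have hinj : Set.InjOn Sigma.fst {p : Σ i : Fin m, Fin (expnt f (u i)) |
        expnt f (u p.1) = r ∧ (p.2 : ℕ) + 1 = r} := by
      rintro ⟨j1, l1⟩ h1' ⟨j2, l2⟩ h2' hEq
      simp only [Set.mem_setOf_eq] at h1' h2'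
      dsimp only at hEq
      subst hEq
      have : l1 = l2 := Fin.ext (by omega)
      rw [this]
    have hcoe : Nat.card {j : Fin m // expnt f (u j) = r} =
        ({j : Fin m | expnt f (u j) = r}).ncard := Nat.card_coe_set_eq _
    rw [hcoe, himg, Set.ncard_image_of_injOn hinj]
  exact key _ _ h1 h2

lemma t_pos [FiniteDimensional K V] (hrep : ∀ i, 1 < ulm f (expnt f (u i))) (i : Fin m) :
    0 < expnt f (u i) := by
  by_contra h
  have h0 : expnt f (u i) = 0 := by omega
  have := hrep i
  rw [h0, ulm_zero] at this
  omega

include hf hU in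
lemma partner [FiniteDimensional K V] (hrep : ∀ i, 1 < ulm f (expnt f (u i))) (i : Fin m) :
    ∃ j, j ≠ i ∧ expnt f (u j) = expnt f (u i) := by
  have hpos := t_pos hrep i
  have hcard := hrep i
  rw [ulm_eq_card hf hU hpos] at hcard
  haveI : Fintype {j : Fin m // expnt f (u j) = expnt f (u i)} := Fintype.ofFinite _
  rw [Nat.card_eq_fintype_card] at hcard
  obtain ⟨⟨j, hj⟩, hne⟩ := Fintype.exists_ne_of_one_lt_card hcard ⟨i, rfl⟩
  exact ⟨j, fun hji => hne (Subtype.ext hji), hj⟩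

lemma adm_key {r : Fin m → ℕ} (hrle : ∀ i, r i ≤ expnt f (u i)) (hrmono : Monotone r)
    (htr : Monotone fun i => expnt f (u i) - r i) (i j : Fin m) {l k : ℕ}
    (hl : expnt f (u j) ≤ l + expnt f (u i)) (hk : r i ≤ k) : r j ≤ l + k := by
  rcases le_total j i with hji | hij
  · have h1 : r j ≤ r i := hrmono hji
    omega
  · have h1 : expnt f (u i) - r i ≤ expnt f (u j) - r j := htr hij
    have h2 := hrle i
    have h3 := hrle j
    omega

lemma r_eq_of_t_eq {r : Fin m → ℕ} (hrle : ∀ i, r i ≤ expnt f (u i)) (hrmono : Monotone r)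
    (htr : Monotone fun i => expnt f (u i) - r i) {i j : Fin m}
    (h : expnt f (u j) = expnt f (u i)) : r j = r i := by
  rcases le_total i j with hij | hji
  · have h1 := hrmono hij
    have h2 := htr hij
    have h3 := hrle i
    have h4 := hrle j
    simp only at h2
    omega
  · have h1 := hrmono hji
    have h2 := htr hji
    have h3 := hrle i
    have h4 := hrle j
    simp only at h2
    omega

lemma hyperinv_Xr {r : Fin m → ℕ} (hrle : ∀ i, r i ≤ expnt f (u i)) (hrmono : Monotone r)
    (htr : Monotone fun i => expnt f (u i) - r i) :
    Hyperinv f (SP hf hU {p | r p.1 ≤ (p.2 : ℕ)}) := by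
  intro g hg x hx
  have hle : SP hf hU {p | r p.1 ≤ (p.2 : ℕ)} ≤
      Submodule.comap g (SP hf hU {p | r p.1 ≤ (p.2 : ℕ)}) := by
    rw [SP, Submodule.span_le]
    rintro - ⟨⟨i, k⟩, hp, rfl⟩
    simp only [Set.mem_setOf_eq] at hp
    rw [SetLike.mem_coe, Submodule.mem_comap, tb_coe, comm_pow f hg]
    have hgu : g (u i) ∈ LinearMap.ker (f ^ expnt f (u i)) := by
      rw [LinearMap.mem_ker, ← comm_pow f hg, expnt_apply f hf, map_zero]
    rw [ker_pow hf hU] at hgu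
    exact pow_mem_SP hf hU (S' := {p | r p.1 ≤ (p.2 : ℕ)})
      (fun p hps hlt =>
        (adm_key hrle hrmono htr i p.1 hps hp : r p.1 ≤ (p.2 : ℕ) + (k : ℕ)))
      hgu
  exact hle hx

lemma w0_mem_Xr {r : Fin m → ℕ} (hrle : ∀ i, r i ≤ expnt f (u i)) :
    (∑ i, (f ^ (r i)) (u i)) ∈ SP hf hU {p | r p.1 ≤ (p.2 : ℕ)} := by
  refine Submodule.sum_mem _ fun i _ => ?_
  by_cases h : r i < expnt f (u i)
  · have : (f ^ (r i)) (u i) = tb hf hU ⟨i, ⟨r i, h⟩⟩ := by rw [tb_coe]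
    rw [this]
    exact tb_mem_SP hf hU (by simp)
  · have : expnt f (u i) ≤ r i := by omega
    rw [apply_eq_zero_of_expnt_le f hf this]
    exact Submodule.zero_mem _

include hf hU in
lemma charHull_eq_Xr [FiniteDimensional K V] (hrep : ∀ i, 1 < ulm f (expnt f (u i)))
    {r : Fin m → ℕ} (hrle : ∀ i, r i ≤ expnt f (u i)) (hrmono : Monotone r)
    (htr : Monotone fun i => expnt f (u i) - r i) :
    charHull f {∑ i, (f ^ (r i)) (u i)} = SP hf hU {p | r p.1 ≤ (p.2 : ℕ)} := by
  classical
  have ht : ∀ k, 0 < expnt f (u k) := t_pos hrep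
  set w0 : V := ∑ i, (f ^ (r i)) (u i) with hw0def
  apply le_antisymm
  · rw [charHull, Submodule.span_le]
    rintro - ⟨b, hb, s, α, hα, rfl⟩
    rw [Set.mem_singleton_iff] at hb
    subst hb
    have h1 : α w0 ∈ SP hf hU {p | r p.1 ≤ (p.2 : ℕ)} :=
      hyperinv_Xr hf hU hrle hrmono htr α.toLinearMap (fun v => hα v) w0
        (w0_mem_Xr hf hU hrle)
    exact hyperinv_Xr hf hU hrle hrmono htr (f ^ s) (fun v => pow_comm_f f s v) _ h1
  · rw [SP, Submodule.span_le]
    rintro - ⟨⟨i, k⟩, hp, rfl⟩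
    simp only [Set.mem_setOf_eq] at hp
    -- find a partner j ≠ i with equal exponent
    obtain ⟨j, hji, htji⟩ := partner hf hU hrep i
    have hrji : r j = r i := r_eq_of_t_eq hrle hrmono htr htji
    -- the automorphism adding u i to u j
    set w : Fin m → V := Function.update u j (u j + u i) with hwdef
    set w' : Fin m → V := Function.update u j (u j - u i) with hw'def
    have hw : ∀ k, (f ^ expnt f (u k)) (w k) = 0 := by
      intro k
      by_cases hk : k = j
      · subst hk
        rw [hwdef, Function.update_self, map_add, expnt_apply f hf]
        rw [show (f ^ expnt f (u k)) (u i) = 0 from by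
          rw [htji]; exact expnt_apply f hf (u i), add_zero]
      · rw [hwdef, Function.update_of_ne hk]
        exact expnt_apply f hf _
    have hw' : ∀ k, (f ^ expnt f (u k)) (w' k) = 0 := by
      intro k
      by_cases hk : k = j
      · subst hk
        rw [hw'def, Function.update_self, map_sub, expnt_apply f hf]
        rw [show (f ^ expnt f (u k)) (u i) = 0 from by
          rw [htji]; exact expnt_apply f hf (u i), sub_zero]
      · rw [hw'def, Function.update_of_ne hk]
        exact expnt_apply f hf _
    have hcomp1 : ∀ k, stdMap hf hU w (w' k) = u k := by
      intro k
      by_cases hk : k = j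
      · subst hk
        rw [hw'def, Function.update_self, map_sub, stdMap_u hf hU w (ht k),
          stdMap_u hf hU w (ht i), hwdef, Function.update_self,
          Function.update_of_ne (fun h => hji h.symm)]
        abel
      · rw [hw'def, Function.update_of_ne hk, stdMap_u hf hU w (ht k), hwdef,
          Function.update_of_ne hk]
    have hcomp2 : ∀ k, stdMap hf hU w' (w k) = u k := by
      intro k
      by_cases hk : k = j
      · subst hk
        rw [hwdef, Function.update_self, map_add, stdMap_u hf hU w' (ht k),
          stdMap_u hf hU w' (ht i), hw'def, Function.update_self,
          Function.update_of_ne (fun h => hji h.symm)]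
        abel
      · rw [hwdef, Function.update_of_ne hk, stdMap_u hf hU w' (ht k), hw'def,
          Function.update_of_ne hk]
    set α := stdAuto hf hU w w' hw hw' hcomp1 hcomp2 with hαdef
    have hαcomm : Commutes f α := stdAuto_commutes hf hU w w' hw hw' hcomp1 hcomp2
    -- α w0 - w0 = f^{r i} (u i)
    have hαw0 : α w0 - w0 = (f ^ (r i)) (u i) := by
      have hsum : α w0 = ∑ k, (f ^ (r k)) (w k) := by
        rw [hαdef, stdAuto_apply, hw0def, map_sum]
        refine Finset.sum_congr rfl fun k _ => ?_
        rw [stdMap_comm_pow hf hU w hw, stdMap_u hf hU w (ht k)]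
      rw [hsum, hw0def, ← Finset.sum_sub_distrib]
      have hterm : ∀ k, (f ^ (r k)) (w k) - (f ^ (r k)) (u k) =
          if k = j then (f ^ (r i)) (u i) else 0 := by
        intro k
        by_cases hk : k = j
        · subst hk
          rw [hwdef, Function.update_self, map_add, if_pos rfl, hrji]
          abel
        · rw [hwdef, Function.update_of_ne hk, if_neg hk, sub_self]
      rw [Finset.sum_congr rfl (fun k _ => hterm k), Finset.sum_ite_eq' Finset.univ j
        (fun _ => (f ^ (r i)) (u i)), if_pos (Finset.mem_univ j)]
    -- now tb ⟨i, k⟩ = f^{k - r i} (α w0) - f^{k - r i} w0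
    have hgen : tb hf hU ⟨i, k⟩ = (f ^ ((k : ℕ) - r i)) (α w0) - (f ^ ((k : ℕ) - r i)) w0 := by
      rw [← map_sub, hαw0, pow_apply_pow, tb_coe]
      congr 2
      dsimp only
      omega
    rw [SetLike.mem_coe, hgen]
    refine sub_mem ?_ ?_
    · exact Submodule.subset_span ⟨w0, rfl, (k : ℕ) - r i, α, hαcomm, rfl⟩
    · exact Submodule.subset_span ⟨w0, rfl, (k : ℕ) - r i, LinearEquiv.refl K V,
        fun v => rfl, rfl⟩

include hf hU in
lemma hyperinv_eq_Xr [FiniteDimensional K V] (hrep : ∀ i, 1 < ulm f (expnt f (u i)))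
    {X : Submodule K V} (hX : Hyperinv f X) :
    ∃ r : Fin m → ℕ, (∀ i, r i ≤ expnt f (u i)) ∧ Monotone r ∧
      (Monotone fun i => expnt f (u i) - r i) ∧
      X = SP hf hU {p | r p.1 ≤ (p.2 : ℕ)} := by
  classical
  have ht : ∀ k, 0 < expnt f (u k) := t_pos hrep
  have hXf : ∀ x ∈ X, f x ∈ X := fun x hx => hX f (fun v => rfl) x hx
  have hXpow : ∀ (s : ℕ), ∀ x ∈ X, (f ^ s) x ∈ X := by
    intro s
    induction s with
    | zero => intro x hx; simpa using hx
    | succ n ih =>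
      intro x hx
      have := hXf _ (ih x hx)
      rwa [apply_pow] at this
  set r : Fin m → ℕ := fun i => sInf {k | (f ^ k) (u i) ∈ X} with hrdef
  have hne : ∀ i, {k | (f ^ k) (u i) ∈ X}.Nonempty := by
    intro i
    exact ⟨expnt f (u i), by
      show (f ^ expnt f (u i)) (u i) ∈ X
      rw [expnt_apply f hf]; exact Submodule.zero_mem _⟩
  have hri : ∀ i, (f ^ (r i)) (u i) ∈ X := fun i => Nat.sInf_mem (hne i)
  have hrmin : ∀ i k, (f ^ k) (u i) ∈ X → r i ≤ k := fun i k hk => Nat.sInf_le hk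
  have hrle : ∀ i, r i ≤ expnt f (u i) := by
    intro i
    apply hrmin
    show (f ^ expnt f (u i)) (u i) ∈ X
    rw [expnt_apply f hf]; exact Submodule.zero_mem _
  have hrmono : Monotone r := by
    intro i j hij
    have htij : expnt f (u i) ≤ expnt f (u j) := hU.2 hij
    set w : Fin m → V := fun k => if k = j then u i else 0 with hwdef
    have hw : ∀ k, (f ^ expnt f (u k)) (w k) = 0 := by
      intro k
      simp only [hwdef]
      by_cases hk : k = j
      · subst hk
        rw [if_pos rfl]
        exact apply_eq_zero_of_expnt_le f hf htij
      · rw [if_neg hk, map_zero]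
    have hg := hX (stdMap hf hU w) (stdMap_comm hf hU w hw) _ (hri j)
    rw [stdMap_comm_pow hf hU w hw, stdMap_u hf hU w (ht j)] at hg
    simp only [hwdef] at hg
    rw [if_true] at hg
    exact hrmin i _ hg
  have hshift : ∀ i j : Fin m, i ≤ j →
      r j ≤ r i + (expnt f (u j) - expnt f (u i)) := by
    intro i j hij
    have htij : expnt f (u i) ≤ expnt f (u j) := hU.2 hij
    set w : Fin m → V := fun k =>
      if k = i then (f ^ (expnt f (u j) - expnt f (u i))) (u j) else 0 with hwdef
    have hw : ∀ k, (f ^ expnt f (u k)) (w k) = 0 := by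
      intro k
      simp only [hwdef]
      by_cases hk : k = i
      · subst hk
        rw [if_pos rfl, pow_apply_pow]
        apply apply_eq_zero_of_expnt_le f hf
        omega
      · rw [if_neg hk, map_zero]
    have hg := hX (stdMap hf hU w) (stdMap_comm hf hU w hw) _ (hri i)
    rw [stdMap_comm_pow hf hU w hw, stdMap_u hf hU w (ht i)] at hg
    simp only [hwdef] at hg
    rw [if_true] at hg
    rw [pow_apply_pow] at hg
    have := hrmin j _ hg
    omega
  have htr : Monotone fun i => expnt f (u i) - r i := by
    intro i j hij
    have h1 := hshift i j hij
    have h2 := hrle i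
    have h3 := hrle j
    have h4 : expnt f (u i) ≤ expnt f (u j) := hU.2 hij
    simp only
    omega
  refine ⟨r, hrle, hrmono, htr, le_antisymm ?_ ?_⟩
  · -- X ≤ Xr
    intro x hx
    rw [mem_SP]
    rintro ⟨i, l⟩ hp
    simp only [Set.mem_setOf_eq, not_le] at hp
    -- project to the i-th cyclic component
    set w : Fin m → V := fun k => if k = i then u i else 0 with hwdef
    have hw : ∀ k, (f ^ expnt f (u k)) (w k) = 0 := by
      intro k
      simp only [hwdef]
      by_cases hk : k = i
      · subst hk
        rw [if_pos rfl]
        exact expnt_apply f hf _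
      · rw [if_neg hk, map_zero]
    set π := stdMap hf hU w with hπdef
    have hyX : π x ∈ X := hX π (stdMap_comm hf hU w hw) x hx
    have hyrep : π x = ∑ l' : Fin (expnt f (u i)),
        (tb hf hU).repr x ⟨i, l'⟩ • tb hf hU ⟨i, l'⟩ := by
      have h1 : π x = ∑ p : Σ i' : Fin m, Fin (expnt f (u i')),
          (tb hf hU).repr x p • π (tb hf hU p) := by
        conv_lhs => rw [← Basis.sum_repr (tb hf hU) x]
        rw [map_sum]
        exact Finset.sum_congr rfl fun p _ => map_smul π _ _
      have h2 : (∑ j, ∑ l' : Fin (expnt f (u j)),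
            (tb hf hU).repr x ⟨j, l'⟩ • π (tb hf hU ⟨j, l'⟩))
          = ∑ l' : Fin (expnt f (u i)),
            (tb hf hU).repr x ⟨i, l'⟩ • π (tb hf hU ⟨i, l'⟩) := by
        apply Finset.sum_eq_single_of_mem i (Finset.mem_univ i)
        intro j _ hj
        refine Finset.sum_eq_zero fun l' _ => ?_
        rw [hπdef, stdMap_tb]
        simp only [hwdef]
        rw [if_neg hj, map_zero, smul_zero]
      rw [h1, ← Finset.univ_sigma_univ, Finset.sum_sigma, h2]
      refine Finset.sum_congr rfl fun l' _ => ?_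
      rw [hπdef, stdMap_tb]
      simp only [hwdef]
      rw [if_true, tb_coe]
    -- coefficients as a function on ℕ
    set c : ℕ → K := fun l' => if h : l' < expnt f (u i)
      then (tb hf hU).repr x ⟨i, ⟨l', h⟩⟩ else 0 with hcdef
    have hy : π x = ∑ l' ∈ Finset.range (expnt f (u i)), c l' • (f ^ l') (u i) := by
      rw [hyrep, ← Fin.sum_univ_eq_sum_range (fun l' => c l' • (f ^ l') (u i))]
      refine Finset.sum_congr rfl fun l' _ => ?_
      rw [hcdef]
      simp only [dif_pos l'.2]
      rw [tb_coe]
    rcases Set.eq_empty_or_nonempty {l' : ℕ | c l' ≠ 0} with hSS | hSS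
    · -- all coefficients vanish
      have : c (l : ℕ) = 0 := by
        by_contra h0
        have hmem : (l : ℕ) ∈ {l' : ℕ | c l' ≠ 0} := h0
        rw [hSS] at hmem
        exact absurd hmem (Set.notMem_empty _)
      rw [hcdef] at this
      simpa [dif_pos l.2] using this
    · set l0 := sInf {l' : ℕ | c l' ≠ 0} with hl0def
      have hc0 : c l0 ≠ 0 := Nat.sInf_mem hSS
      have hcmin : ∀ l' < l0, c l' = 0 := by
        intro l' hl'
        by_contra h0
        have h1 : l0 ≤ l' := Nat.sInf_le h0
        omega
      have hl0lt : l0 < expnt f (u i) := by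
        by_contra h0
        apply hc0
        rw [hcdef]
        exact dif_neg (by omega)
      -- downward induction: f^d (u i) ∈ X for l0 ≤ d
      have hdown : ∀ n d, expnt f (u i) - d ≤ n → l0 ≤ d → (f ^ d) (u i) ∈ X := by
        intro n
        induction n with
        | zero =>
          intro d hd _
          rw [apply_eq_zero_of_expnt_le f hf (by omega)]
          exact Submodule.zero_mem _
        | succ n ih =>
          intro d hd hld
          by_cases hdt : expnt f (u i) ≤ d
          · rw [apply_eq_zero_of_expnt_le f hf hdt]
            exact Submodule.zero_mem _
          · have hyd : (f ^ (d - l0)) (π x) ∈ X := hXpow _ _ hyX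
            rw [hy, map_sum] at hyd
            have hterm : ∀ l' ∈ Finset.range (expnt f (u i)),
                (f ^ (d - l0)) (c l' • (f ^ l') (u i)) = c l' • (f ^ (d - l0 + l')) (u i) := by
              intro l' _
              rw [map_smul, pow_apply_pow]
            rw [Finset.sum_congr rfl hterm] at hyd
            have hl0mem : l0 ∈ Finset.range (expnt f (u i)) := Finset.mem_range.mpr hl0lt
            rw [← Finset.add_sum_erase _ _ hl0mem] at hyd
            have hrest : ∑ l' ∈ (Finset.range (expnt f (u i))).erase l0,
                c l' • (f ^ (d - l0 + l')) (u i) ∈ X := by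
              refine Submodule.sum_mem _ fun l' hl' => ?_
              rcases Finset.mem_erase.mp hl' with ⟨hne', hmem'⟩
              by_cases hcl : c l' = 0
              · rw [hcl, zero_smul]
                exact Submodule.zero_mem _
              · have hge : l0 ≤ l' := Nat.sInf_le hcl
                have hgt : l0 < l' := by omega
                refine Submodule.smul_mem _ _ (ih (d - l0 + l') (by omega) (by omega))
            have hmain : c l0 • (f ^ (d - l0 + l0)) (u i) ∈ X := by
              have := Submodule.sub_mem X hyd hrest
              simpa using this
            have hdl0 : d - l0 + l0 = d := by omega
            rw [hdl0] at hmain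
            have := Submodule.smul_mem X (c l0)⁻¹ hmain
            rwa [smul_smul, inv_mul_cancel₀ hc0, one_smul] at this
      have hl0X : (f ^ l0) (u i) ∈ X := hdown (expnt f (u i)) l0 (by omega) le_rfl
      have hrl0 : r i ≤ l0 := hrmin i l0 hl0X
      -- now conclude: l < r i ≤ l0, so c l = 0
      have : c (l : ℕ) = 0 := hcmin _ (by omega)
      rw [hcdef] at this
      simpa [dif_pos l.2] using this
  · -- Xr ≤ X
    rw [SP, Submodule.span_le]
    rintro - ⟨⟨i, k⟩, hp, rfl⟩
    simp only [Set.mem_setOf_eq] at hp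
    rw [SetLike.mem_coe, tb_coe]
    have hkr : (k : ℕ) - r i + r i = (k : ℕ) := by omega
    have : (f ^ (k : ℕ)) (u i) = (f ^ ((k : ℕ) - r i)) ((f ^ (r i)) (u i)) := by
      rw [pow_apply_pow, hkr]
    rw [this]
    exact hXpow _ _ (hri i)

end Tuple

end Stmt17

theorem stmt17 {K V : Type*} [Field K] [AddCommGroup V] [Module K V]
    [FiniteDimensional K V] (f : V →ₗ[K] V) (hf : IsNilpotent f)
    {m : ℕ} (u : Fin m → V) (hU : IsGenTuple f u)
    (hrep : ∀ i, 1 < ulm f (expnt f (u i)))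
    (X : Submodule K V) :
    Hyperinv f X ↔
      ∃ r : Fin m → ℕ, (∀ i, r i ≤ expnt f (u i)) ∧ Monotone r ∧
        Monotone (fun i => expnt f (u i) - r i) ∧
        X = charHull f {∑ i, (f ^ (r i)) (u i)} := by
  constructor
  · intro hX
    obtain ⟨r, h1, h2, h3, h4⟩ := Stmt17.hyperinv_eq_Xr hf hU hrep hX
    exact ⟨r, h1, h2, h3, by rw [h4, Stmt17.charHull_eq_Xr hf hU hrep h1 h2 h3]⟩
  · rintro ⟨r, h1, h2, h3, rfl⟩
    rw [Stmt17.charHull_eq_Xr hf hU hrep h1 h2 h3]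
    exact Stmt17.hyperinv_Xr hf hU h1 h2 h3
end
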